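/- arXiv:1212.1056 — 3 statements merged into one kernel-verified Lean document; each statement's English description precedes it below -/
import Mathlib

section
/- A binary linear code C ⊆ GF(2)^n has a 2-basis if and only if there exists a finite graph G (possibly with loops and parallel edges) with n edges such that C equals the cut space of G. -/
open scoped Classical
noncomputable section

/-- Points of `ℝ^d`. -/
abbrev Pt (d : ℕ) : Type := EuclideanSpace ℝ (Fin d)

/-- A triangular configuration embedded into `ℝ^d`: a finite geometric simplicial
complex each of whose faces has at most 3 vertices. -/
structure TriangularConfiguration (d : ℕ) where
  faces : Finset (Finset (Pt d))
  not_empty_mem : ∅ ∉ faces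
  indep : ∀ s ∈ faces, AffineIndependent ℝ ((↑) : s → Pt d)
  down_closed : ∀ s ∈ faces, ∀ u ⊆ s, u ≠ ∅ → u ∈ faces
  inter_subset_convexHull : ∀ s ∈ faces, ∀ u ∈ faces,
    convexHull ℝ (s : Set (Pt d)) ∩ convexHull ℝ (u : Set (Pt d)) ⊆
      convexHull ℝ ((s ∩ u : Finset (Pt d)) : Set (Pt d))
  card_le : ∀ s ∈ faces, s.card ≤ 3

namespace TriangularConfiguration

variable {d : ℕ}

/-- The triangles (2-dimensional faces) of a triangular configuration. -/
def triangles (Δ : TriangularConfiguration d) : Finset (Finset (Pt d)) :=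
  Δ.faces.filter fun s => s.card = 3

/-- The edges (1-dimensional faces) of a triangular configuration. -/
def edges (Δ : TriangularConfiguration d) : Finset (Finset (Pt d)) :=
  Δ.faces.filter fun s => s.card = 2

/-- The type of triangles of `Δ`. -/
abbrev Tri (Δ : TriangularConfiguration d) : Type := {t : Finset (Pt d) // t ∈ Δ.triangles}

/-- The cycle space of `Δ` over `GF(2)`: the kernel of the edge–triangle incidence
matrix of `Δ`. -/
def cycleSpace (Δ : TriangularConfiguration d) : Submodule (ZMod 2) (Δ.Tri → ZMod 2) where
  carrier := {x | ∀ e ∈ Δ.edges, (∑ t : Δ.Tri, if e ⊆ t.1 then x t else 0) = 0}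
  zero_mem' := by intro e _; simp
  add_mem' := by
    intro a b ha hb e he
    have h : (∑ t : Δ.Tri, if e ⊆ t.1 then (a + b) t else 0)
        = (∑ t : Δ.Tri, if e ⊆ t.1 then a t else 0)
          + (∑ t : Δ.Tri, if e ⊆ t.1 then b t else 0) := by
      rw [← Finset.sum_add_distrib]
      refine Finset.sum_congr rfl fun t _ => ?_
      by_cases h : e ⊆ t.1 <;> simp [h]
    rw [h, ha e he, hb e he, add_zero]
  smul_mem' := by
    intro c x hx e he
    have h : (∑ t : Δ.Tri, if e ⊆ t.1 then (c • x) t else 0)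
        = c * ∑ t : Δ.Tri, if e ⊆ t.1 then x t else 0 := by
      rw [Finset.mul_sum]
      refine Finset.sum_congr rfl fun t _ => ?_
      by_cases h : e ⊆ t.1 <;> simp [h]
    rw [h, hx e he, mul_zero]

/-- The underlying point set `|Δ|` of a triangular configuration. -/
def space (Δ : TriangularConfiguration d) : Set (Pt d) :=
  ⋃ s ∈ Δ.faces, convexHull ℝ (s : Set (Pt d))

/-- A cell of `Δ` is a connected component of `ℝ^d \ |Δ|`. -/
def IsCell (Δ : TriangularConfiguration d) (X : Set (Pt d)) : Prop :=
  ∃ x ∈ Δ.spaceᶜ, X = connectedComponentIn Δ.spaceᶜ x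

/-- The set of cells of `Δ`. -/
def cells (Δ : TriangularConfiguration d) : Set (Set (Pt d)) := {X | Δ.IsCell X}

/-- The number of cells of `Δ`. -/
def numCells (Δ : TriangularConfiguration d) : ℕ := Δ.cells.ncard

/-- A triangle `t` is incident with a cell `X` if `t ⊆ cl(X)`. -/
def IncidentCell (Δ : TriangularConfiguration d) (t : Finset (Pt d)) (X : Set (Pt d)) : Prop :=
  Δ.IsCell X ∧ convexHull ℝ (t : Set (Pt d)) ⊆ closure X

/-- A strong boundary: a triangular configuration with at least two cells, every
proper subconfiguration of which has fewer cells. -/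
def IsStrongBoundary (C : TriangularConfiguration d) : Prop :=
  2 ≤ C.numCells ∧
    ∀ C' : TriangularConfiguration d, C'.faces ⊂ C.faces → C'.numCells < C.numCells

/-- A strong boundary of `Δ`: a strong boundary that is a subconfiguration of `Δ`. -/
def IsStrongBoundaryOf (Δ C : TriangularConfiguration d) : Prop :=
  C.IsStrongBoundary ∧ C.faces ⊆ Δ.faces

/-- The inner cell `int C` of a strong boundary `C` (the union of its bounded cells;
for a strong boundary there is exactly one). -/
def intCell (C : TriangularConfiguration d) : Set (Pt d) :=
  ⋃₀ {X | C.IsCell X ∧ Bornology.IsBounded X}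

/-- The outer cell `ext C` of a strong boundary `C` (the union of its unbounded cells;
for a strong boundary there is exactly one). -/
def extCell (C : TriangularConfiguration d) : Set (Pt d) :=
  ⋃₀ {X | C.IsCell X ∧ ¬Bornology.IsBounded X}

/-- An elementary strong boundary of `Δ`. -/
def IsElementary (Δ C : TriangularConfiguration d) : Prop :=
  IsStrongBoundaryOf Δ C ∧
    ∀ C' : TriangularConfiguration d, IsStrongBoundaryOf Δ C' →
      ¬((C.intCell ∩ C'.intCell).Nonempty ∧ (C.intCell ∩ C'.extCell).Nonempty)

/-- `Δ` is connected if every two triangles of `Δ` belong to a common strong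
boundary of `Δ`. -/
def Connected (Δ : TriangularConfiguration d) : Prop :=
  ∀ t₁ ∈ Δ.triangles, ∀ t₂ ∈ Δ.triangles,
    ∃ C : TriangularConfiguration d, IsStrongBoundaryOf Δ C ∧ t₁ ∈ C.faces ∧ t₂ ∈ C.faces

/-- The characteristic vector in `GF(2)^{T(Δ)}` of a subconfiguration `C` of `Δ`. -/
def chi (Δ C : TriangularConfiguration d) : Δ.Tri → ZMod 2 :=
  fun t => if t.1 ∈ C.faces then 1 else 0

/-- The set of characteristic vectors of elementary strong boundaries of `Δ`. -/
def esbVectors (Δ : TriangularConfiguration d) : Set (Δ.Tri → ZMod 2) :=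
  {x | ∃ C : TriangularConfiguration d, IsElementary Δ C ∧ x = Δ.chi C}

/-- The configuration `Δ` with the (2-dimensional) triangle face `t` removed,
keeping all other faces of `Δ`. -/
def eraseTriangle (Δ : TriangularConfiguration d) (t : Finset (Pt d))
    (ht : t ∈ Δ.triangles) : TriangularConfiguration d where
  faces := Δ.faces.erase t
  not_empty_mem h := Δ.not_empty_mem (Finset.mem_of_mem_erase h)
  indep s hs := Δ.indep s (Finset.mem_of_mem_erase hs)
  down_closed := by
    intro s hs u hu hune
    have hsf : s ∈ Δ.faces := Finset.mem_of_mem_erase hs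
    refine Finset.mem_erase.2 ⟨?_, Δ.down_closed s hsf u hu hune⟩
    rintro rfl
    have htc : u.card = 3 := (Finset.mem_filter.1 ht).2
    have hsc : s.card ≤ 3 := Δ.card_le s hsf
    have : u = s := Finset.eq_of_subset_of_card_le hu (by omega)
    exact (Finset.mem_erase.1 hs).1 this.symm
  inter_subset_convexHull s hs u hu :=
    Δ.inter_subset_convexHull s (Finset.mem_of_mem_erase hs) u (Finset.mem_of_mem_erase hu)
  card_le s hs := Δ.card_le s (Finset.mem_of_mem_erase hs)

/-- The subconfiguration `K(E)` of `Δ` generated by a set `E` of triangles of `Δ`: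
the triangles of `E` together with all their faces. -/
def generatedBy (Δ : TriangularConfiguration d) (E : Finset (Finset (Pt d))) :
    TriangularConfiguration d where
  faces := Δ.faces.filter fun s => ∃ u ∈ E, s ⊆ u
  not_empty_mem h := Δ.not_empty_mem (Finset.mem_filter.1 h).1
  indep s hs := Δ.indep s (Finset.mem_filter.1 hs).1
  down_closed := by
    intro s hs u hu hune
    have h := Finset.mem_filter.1 hs
    obtain ⟨w, hw, hsw⟩ := h.2
    exact Finset.mem_filter.2 ⟨Δ.down_closed s h.1 u hu hune, w, hw, hu.trans hsw⟩
  inter_subset_convexHull s hs u hu :=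
    Δ.inter_subset_convexHull s (Finset.mem_filter.1 hs).1 u (Finset.mem_filter.1 hu).1
  card_le s hs := Δ.card_le s (Finset.mem_filter.1 hs).1

end TriangularConfiguration

/-- A binary linear code (given as a subspace of `GF(2)^ι`) has a 2-basis if it has a
basis in which every coordinate is non-zero in at most two basis vectors. -/
def HasTwoBasis {ι : Type*} (C : Submodule (ZMod 2) (ι → ZMod 2)) : Prop :=
  ∃ B : Finset (ι → ZMod 2),
    LinearIndependent (ZMod 2) (fun b : {x // x ∈ B} => (b : ι → ZMod 2)) ∧
    Submodule.span (ZMod 2) (B : Set (ι → ZMod 2)) = C ∧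
    ∀ i : ι, (B.filter fun b => b i ≠ 0).card ≤ 2

/-- A binary linear code `C ⊆ GF(2)^n` has a geometric representation embeddable into
`ℝ^d` if there is a triangular configuration `Δ` embedded in `ℝ^d` such that
`C = ker Δ / S` for some set `S` of triangles of `Δ` (the coordinates outside `S`
being enumerated by an injection `g`) and `dim C = dim ker Δ`. -/
def HasGeomRep (d n : ℕ) (C : Submodule (ZMod 2) (Fin n → ZMod 2)) : Prop :=
  ∃ (Δ : TriangularConfiguration d) (g : Fin n → Δ.Tri),
    Function.Injective g ∧
    C = Δ.cycleSpace.map (LinearMap.funLeft (ZMod 2) (ZMod 2) g) ∧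
    Module.finrank (ZMod 2) C = Module.finrank (ZMod 2) Δ.cycleSpace

/-- The cut space of a finite graph (possibly with loops and parallel edges) whose `n`
edges are given by their endpoints `ends : Fin n → Sym2 V`: the span of the incidence
vectors `χ(E(v))`, where `χ(E(v)) i = 1` iff edge `i` is a non-loop edge incident with `v`. -/
def cutSpace {V : Type} [Fintype V] {n : ℕ} (ends : Fin n → Sym2 V) :
    Submodule (ZMod 2) (Fin n → ZMod 2) :=
  Submodule.span (ZMod 2)
    {x | ∃ v : V, x = fun i => if v ∈ ends i ∧ ¬(ends i).IsDiag then (1 : ZMod 2) else 0}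


/-- A binary linear code `C ⊆ GF(2)^n` has a 2-basis iff there is a finite
graph `G` (possibly with loops and parallel edges) with `n` edges whose cut space is `C`. -/
theorem hasTwoBasis_iff_cutSpace (n : ℕ)
    (C : Submodule (ZMod 2) (Fin n → ZMod 2)) :
    HasTwoBasis C ↔
      ∃ (V : Type) (_ : Fintype V) (ends : Fin n → Sym2 V), C = cutSpace ends := by
    classical
  constructor
  · rintro ⟨B, _hli, hspan, hcard⟩
    set F : Fin n → Finset (Fin n → ZMod 2) := fun i => B.filter fun b => b i ≠ 0 with hF
    have hone : ∀ x : ZMod 2, x ≠ 0 → x = 1 := by decide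
    have hend : ∀ i : Fin n, ∃ p : Sym2 (Option {x // x ∈ B}),
        (∀ (b : Fin n → ZMod 2) (hb : b ∈ B),
            ((some ⟨b, hb⟩ ∈ p ∧ ¬ p.IsDiag) ↔ b i ≠ 0)) ∧
        ((none ∈ p ∧ ¬ p.IsDiag) ↔ (F i).card = 1) := by
      intro i
      have hle : (F i).card ≤ 2 := hcard i
      rcases eq_or_ne ((F i).card) 2 with hc2 | hc2
      · obtain ⟨a, c, hac, hFi⟩ := Finset.card_eq_two.1 hc2
        have haB : a ∈ B := by
          have : a ∈ F i := by rw [hFi]; simp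
          exact (Finset.mem_filter.1 this).1
        have hcB : c ∈ B := by
          have : c ∈ F i := by rw [hFi]; simp
          exact (Finset.mem_filter.1 this).1
        have hdiag : ¬ (s((some ⟨a, haB⟩ : Option {x // x ∈ B}), some ⟨c, hcB⟩)).IsDiag := by
          simp only [Sym2.mk_isDiag_iff]
          intro h
          exact hac (by simpa using h)
        refine ⟨s(some ⟨a, haB⟩, some ⟨c, hcB⟩), ?_, ?_⟩
        · intro b hb
          constructor
          · rintro ⟨hm, -⟩
            rcases Sym2.mem_iff.1 hm with h | h
            · have hba : b = a := by simpa using h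
              subst hba
              have : b ∈ F i := by rw [hFi]; simp
              exact (Finset.mem_filter.1 this).2
            · have hbc : b = c := by simpa using h
              subst hbc
              have : b ∈ F i := by rw [hFi]; simp
              exact (Finset.mem_filter.1 this).2
          · intro hne
            have hbF : b ∈ F i := Finset.mem_filter.2 ⟨hb, hne⟩
            rw [hFi] at hbF
            rcases Finset.mem_insert.1 hbF with h | h
            · subst h; exact ⟨Sym2.mem_iff.2 (Or.inl rfl), hdiag⟩
            · have := Finset.mem_singleton.1 h; subst this
              exact ⟨Sym2.mem_iff.2 (Or.inr rfl), hdiag⟩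
        · constructor
          · rintro ⟨hm, -⟩
            rcases Sym2.mem_iff.1 hm with h | h <;> simp at h
          · intro h; omega
      · rcases eq_or_ne ((F i).card) 1 with hc1 | hc1
        · obtain ⟨a, hFi⟩ := Finset.card_eq_one.1 hc1
          have haB : a ∈ B := by
            have : a ∈ F i := by rw [hFi]; simp
            exact (Finset.mem_filter.1 this).1
          have hdiag : ¬ (s((some ⟨a, haB⟩ : Option {x // x ∈ B}), none)).IsDiag := by
            simp [Sym2.mk_isDiag_iff]
          refine ⟨s(some ⟨a, haB⟩, none), ?_, ?_⟩
          · intro b hb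
            constructor
            · rintro ⟨hm, -⟩
              rcases Sym2.mem_iff.1 hm with h | h
              · have hba : b = a := by simpa using h
                subst hba
                have : b ∈ F i := by rw [hFi]; simp
                exact (Finset.mem_filter.1 this).2
              · simp at h
            · intro hne
              have hbF : b ∈ F i := Finset.mem_filter.2 ⟨hb, hne⟩
              rw [hFi, Finset.mem_singleton] at hbF
              subst hbF
              exact ⟨Sym2.mem_iff.2 (Or.inl rfl), hdiag⟩
          · simp only [hc1, iff_true]
            exact ⟨Sym2.mem_iff.2 (Or.inr rfl), hdiag⟩
        · have hc0 : (F i).card = 0 := by omega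
          have hFi : F i = ∅ := Finset.card_eq_zero.1 hc0
          refine ⟨s((none : Option {x // x ∈ B}), none), ?_, ?_⟩
          · intro b hb
            constructor
            · rintro ⟨-, hd⟩
              exact absurd (Sym2.mk_isDiag_iff.2 rfl) hd
            · intro hne
              have hbF : b ∈ F i := Finset.mem_filter.2 ⟨hb, hne⟩
              rw [hFi] at hbF; simp at hbF
          · constructor
            · rintro ⟨-, hd⟩
              exact absurd (Sym2.mk_isDiag_iff.2 rfl) hd
            · intro h; omega
    choose ends h1 h2 using hend
    refine ⟨Option {x // x ∈ B}, inferInstance, ends, ?_⟩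
    apply le_antisymm
    · rw [← hspan]
      apply Submodule.span_le.2
      intro b hb
      have hb' : b ∈ B := Finset.mem_coe.1 hb
      rw [cutSpace]
      refine Submodule.subset_span ⟨some ⟨b, hb'⟩, funext fun i => ?_⟩
      by_cases h : b i = 0
      · rw [h, if_neg]
        rw [h1 i b hb']
        simpa using h
      · rw [if_pos ((h1 i b hb').2 h), hone _ h]
    · rw [cutSpace]
      apply Submodule.span_le.2
      rintro x ⟨v, rfl⟩
      rw [← hspan]
      rcases v with _ | ⟨b, hb⟩
      · convert Submodule.sum_mem (Submodule.span (ZMod 2) (B : Set (Fin n → ZMod 2)))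
          (fun b (hb : b ∈ B) => Submodule.subset_span hb) using 2
        rw [SetLike.mem_coe]
        refine iff_of_eq (congrArg (· ∈ Submodule.span (ZMod 2) (B : Set (Fin n → ZMod 2))) ?_)
        funext i
        have hBsum : (∑ b ∈ B, b) i = ∑ b ∈ B, b i := Finset.sum_apply i B _
        have hBsum2 : ∑ b ∈ B, b i = ((F i).card : ZMod 2) := by
          rw [← Finset.sum_filter_ne_zero]
          rw [show (B.filter fun b => b i ≠ 0) = F i from rfl]
          rw [Finset.sum_congr rfl fun b hb => hone _ (Finset.mem_filter.1 hb).2]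
          simp
          rfl
        rw [hBsum, hBsum2]
        by_cases h : (F i).card = 1
        · rw [if_pos ((h2 i).2 h), h]; decide
        · rw [if_neg]
          · have hle : (F i).card ≤ 2 := hcard i
            have : (F i).card = 0 ∨ (F i).card = 2 := by omega
            rcases this with h0 | h0 <;> rw [h0] <;> decide
          · rw [h2 i]; exact h
      · convert Submodule.subset_span hb using 2
        rename_i i
        by_cases h : b i = 0
        · rw [h, if_neg]
          rw [h1 i b hb]
          simpa using h
        · rw [if_pos ((h1 i b hb).2 h), hone _ h]
  · rintro ⟨V, _, ends, rfl⟩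
    set chiV : V → (Fin n → ZMod 2) :=
      fun v i => if v ∈ ends i ∧ ¬(ends i).IsDiag then 1 else 0 with hchiV
    set S : Set (Fin n → ZMod 2) :=
      {x | ∃ v : V, x = fun i => if v ∈ ends i ∧ ¬(ends i).IsDiag then (1 : ZMod 2) else 0}
      with hSdef
    have hSfin : S.Finite := by
      apply (Set.finite_range chiV).subset
      rintro x ⟨v, rfl⟩
      exact ⟨v, rfl⟩
    obtain ⟨b, hbS, hspan, hli⟩ := exists_linearIndependent (ZMod 2) S
    have hfin : b.Finite := hSfin.subset hbS
    refine ⟨hfin.toFinset, ?_, ?_, ?_⟩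
    · have h2 := hli
      rw [← hfin.coe_toFinset] at h2
      exact h2
    · rw [hfin.coe_toFinset]
      exact hspan
    · intro i
      by_cases hd : (ends i).IsDiag
      · have hemp : hfin.toFinset.filter (fun x => x i ≠ 0) = ∅ := by
          apply Finset.filter_eq_empty_iff.2
          intro x hx
          obtain ⟨v, rfl⟩ := hbS (hfin.mem_toFinset.1 hx)
          simp [hd]
        rw [hemp]
        simp
      · obtain ⟨u, w, huw⟩ : ∃ u w, ends i = s(u, w) := by
          induction ends i using Sym2.ind with
          | _ u w => exact ⟨u, w, rfl⟩
        have hsub : hfin.toFinset.filter (fun x => x i ≠ 0) ⊆ {chiV u, chiV w} := by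
          intro x hx
          obtain ⟨hxB, hxi⟩ := Finset.mem_filter.1 hx
          obtain ⟨v, rfl⟩ := hbS (hfin.mem_toFinset.1 hxB)
          have hv : v ∈ ends i := by
            by_contra hv
            exact hxi (by simp [hv])
          rw [huw, Sym2.mem_iff] at hv
          rcases hv with rfl | rfl
          · exact Finset.mem_insert.2 (Or.inl (by rw [hchiV]))
          · exact Finset.mem_insert.2 (Or.inr (Finset.mem_singleton.2 (by rw [hchiV])))
        calc (hfin.toFinset.filter fun x => x i ≠ 0).card
            ≤ ({chiV u, chiV w} : Finset (Fin n → ZMod 2)).card := Finset.card_le_card hsub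
          _ ≤ 2 := le_trans (Finset.card_insert_le _ _) (by simp)
end
end

section
/- Let Δ be a triangular configuration embedded into ℝ³. Then every triangle t of Δ is incident with at least one cell of Δ and at most two cells of Δ. -/
open scoped Classical
noncomputable section

section Aux

open Metric

/-- Affine coordinate system adapted to a triangle `t` of `Δ`. -/
structure TriSetup (Δ : TriangularConfiguration 3) (t : Finset (Pt 3)) where
  u : Pt 3 →ᵃ[ℝ] ℝ
  v : Pt 3 →ᵃ[ℝ] ℝ
  w : Pt 3 →ᵃ[ℝ] ℝ
  nv : Pt 3
  hn : nv ≠ 0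
  hull_eq : convexHull ℝ (t : Set (Pt 3)) =
    {x | 0 ≤ u x ∧ 0 ≤ v x ∧ u x + v x ≤ 1 ∧ w x = 0}
  shift_u : ∀ (x : Pt 3) (s : ℝ), u (x + s • nv) = u x
  shift_v : ∀ (x : Pt 3) (s : ℝ), v (x + s • nv) = v x
  shift_w : ∀ (x : Pt 3) (s : ℝ), w (x + s • nv) = w x + s
  notK : ∀ q : Pt 3, 0 < u q → 0 < v q → u q + v q < 1 → w q = 0 →
    ∀ s ∈ Δ.faces, s ≠ t → q ∉ convexHull ℝ (s : Set (Pt 3))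
  cen : Pt 3
  hcu : u cen = 1/3
  hcv : v cen = 1/3
  hcw : w cen = 0

set_option maxHeartbeats 1000000 in
lemma exists_triSetup (Δ : TriangularConfiguration 3) (t : Finset (Pt 3))
    (ht : t ∈ Δ.triangles) : Nonempty (TriSetup Δ t) := by
  have htf : t ∈ Δ.faces := (Finset.mem_filter.mp ht).1
  have htc : t.card = 3 := (Finset.mem_filter.mp ht).2
  obtain ⟨a, b, c, hab, hac, hbc, rfl⟩ := Finset.card_eq_three.mp htc
  have ha : a ∈ ({a, b, c} : Finset (Pt 3)) := by simp
  have hb : b ∈ ({a, b, c} : Finset (Pt 3)) := by simp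
  have hc : c ∈ ({a, b, c} : Finset (Pt 3)) := by simp
  have hindep := Δ.indep _ htf
  -- affine independence of ![a, b, c]
  have hf : Function.Injective
      (![⟨a, ha⟩, ⟨b, hb⟩, ⟨c, hc⟩] : Fin 3 → {x // x ∈ ({a, b, c} : Finset (Pt 3))}) := by
    intro i j hij
    fin_cases i <;> fin_cases j <;>
      simp_all [Subtype.mk.injEq, hab, hac, hbc, hab.symm, hac.symm, hbc.symm]
  have hind3 : AffineIndependent ℝ ![a, b, c] := by
    have h := hindep.comp_embedding ⟨_, hf⟩
    convert h using 1
    funext i; fin_cases i <;> rfl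
  have hL : ∀ g0 g1 : ℝ, g0 • (b - a) + g1 • (c - a) = 0 → g0 = 0 ∧ g1 = 0 := by
    intro g0 g1 h
    have hsum : (Finset.univ : Finset (Fin 3)).sum ![-(g0 + g1), g0, g1] = 0 := by
      rw [Fin.sum_univ_three]
      show -(g0 + g1) + g0 + g1 = 0
      ring
    have hcomb : ∑ e ∈ Finset.univ, (![-(g0 + g1), g0, g1] : Fin 3 → ℝ) e • (![a,b,c] : Fin 3 → Pt 3) e = 0 := by
      rw [Fin.sum_univ_three]
      show (-(g0 + g1)) • a + g0 • b + g1 • c = 0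
      have e : (-(g0+g1)) • a + g0 • b + g1 • c = g0 • (b - a) + g1 • (c - a) := by module
      rw [e, h]
    have h1 := affineIndependent_iff.mp hind3 Finset.univ _ hsum hcomb 1 (Finset.mem_univ _)
    have h2 := affineIndependent_iff.mp hind3 Finset.univ _ hsum hcomb 2 (Finset.mem_univ _)
    simp at h1 h2
    exact ⟨h1, h2⟩
  -- a normal vector
  set V : Submodule ℝ (Pt 3) := Submodule.span ℝ ({b - a, c - a} : Set (Pt 3)) with hV
  have hVne : Vᗮ ≠ ⊥ := by
    intro hbot
    have hVtop : V = ⊤ := Submodule.orthogonal_eq_bot_iff.mp hbot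
    have h1 : Module.finrank ℝ V ≤ 2 := by
      have h2 := finrank_span_finset_le_card (R := ℝ) ({b - a, c - a} : Finset (Pt 3))
      have h3 : (({b - a, c - a} : Finset (Pt 3)) : Set (Pt 3)) = {b - a, c - a} := by simp
      have h4 : ({b - a, c - a} : Finset (Pt 3)).card ≤ 2 :=
        (Finset.card_insert_le _ _).trans (by simp)
      rw [Set.finrank, h3] at h2
      exact h2.trans h4
    rw [hVtop, finrank_top] at h1
    rw [finrank_euclideanSpace_fin] at h1
    omega
  obtain ⟨n, hnV, hn0⟩ := (Submodule.ne_bot_iff _).mp hVne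
  have hbn : (inner ℝ (b - a) n : ℝ) = 0 :=
    (Submodule.mem_orthogonal _ _).mp hnV _ (Submodule.subset_span (by simp))
  have hcn : (inner ℝ (c - a) n : ℝ) = 0 :=
    (Submodule.mem_orthogonal _ _).mp hnV _ (Submodule.subset_span (by simp))
  have hli : LinearIndependent ℝ ![b - a, c - a, n] := by
    rw [Fintype.linearIndependent_iff]
    intro g hg
    rw [Fin.sum_univ_three] at hg
    simp only [Matrix.cons_val_zero, Matrix.cons_val_one, Matrix.head_cons,
      Matrix.cons_val_two, Matrix.tail_cons] at hg
    have h2 : g 2 = 0 := by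
      have hinner : (inner ℝ (g 0 • (b - a) + g 1 • (c - a) + g 2 • n) n : ℝ) = 0 := by
        rw [hg, inner_zero_left]
      rw [inner_add_left, inner_add_left, real_inner_smul_left, real_inner_smul_left,
        real_inner_smul_left, hbn, hcn, mul_zero, mul_zero, zero_add, zero_add] at hinner
      rcases mul_eq_zero.mp hinner with h | h
      · exact h
      · exact absurd (inner_self_eq_zero.mp h) hn0
    rw [h2, zero_smul, add_zero] at hg
    have := hL _ _ hg
    intro i; fin_cases i <;> simp [this.1, this.2, h2]
  have hcard : Fintype.card (Fin 3) = Module.finrank ℝ (Pt 3) := by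
    simp [finrank_euclideanSpace_fin]
  set B := basisOfLinearIndependentOfCardEqFinrank hli hcard with hBdef
  have hB : ⇑B = ![b - a, c - a, n] := coe_basisOfLinearIndependentOfCardEqFinrank hli hcard
  set coordA : Fin 3 → (Pt 3 →ᵃ[ℝ] ℝ) := fun i =>
    (B.coord i).toAffineMap.comp ((AffineEquiv.vaddConst ℝ a).symm : Pt 3 ≃ᵃ[ℝ] Pt 3).toAffineMap
    with hcoordA
  have happ : ∀ (i : Fin 3) (x : Pt 3), coordA i x = B.repr (x - a) i := by
    intro i x
    simp [hcoordA, Module.Basis.coord_apply, vsub_eq_sub]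
  have hco : ∀ (i : Fin 3) (α β γ : ℝ),
      coordA i (a + (α • (b - a) + β • (c - a) + γ • n)) = ![α, β, γ] i := by
    intro i α β γ
    rw [happ, add_sub_cancel_left]
    have e0 : b - a = B 0 := by rw [hB]; rfl
    have e1 : c - a = B 1 := by rw [hB]; rfl
    have e2 : n = B 2 := by rw [hB]; rfl
    rw [e0, e1, e2]
    simp only [map_add, map_smul, Module.Basis.repr_self, Finsupp.coe_add, Finsupp.coe_smul,
      Pi.add_apply, Pi.smul_apply, Finsupp.single_apply, smul_eq_mul]
    fin_cases i <;> simp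
  have hrecon : ∀ x : Pt 3,
      x = a + (coordA 0 x • (b - a) + coordA 1 x • (c - a) + coordA 2 x • n) := by
    intro x
    have h := B.sum_repr (x - a)
    rw [Fin.sum_univ_three] at h
    have e0 : B 0 = b - a := by rw [hB]; rfl
    have e1 : B 1 = c - a := by rw [hB]; rfl
    have e2 : B 2 = n := by rw [hB]; rfl
    rw [e0, e1, e2] at h
    rw [happ, happ, happ, h]
    abel
  have hpa : coordA 0 a = 0 ∧ coordA 1 a = 0 ∧ coordA 2 a = 0 :=
    ⟨by simpa using hco 0 0 0 0, by simpa using hco 1 0 0 0, by simpa using hco 2 0 0 0⟩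
  have hpb : coordA 0 b = 1 ∧ coordA 1 b = 0 ∧ coordA 2 b = 0 :=
    ⟨by simpa using hco 0 1 0 0, by simpa using hco 1 1 0 0, by simpa using hco 2 1 0 0⟩
  have hpc : coordA 0 c = 0 ∧ coordA 1 c = 1 ∧ coordA 2 c = 0 :=
    ⟨by simpa using hco 0 0 1 0, by simpa using hco 1 0 1 0, by simpa using hco 2 0 1 0⟩
  have hhull : convexHull ℝ (({a, b, c} : Finset (Pt 3)) : Set (Pt 3)) =
      {x | 0 ≤ coordA 0 x ∧ 0 ≤ coordA 1 x ∧ coordA 0 x + coordA 1 x ≤ 1 ∧ coordA 2 x = 0} := by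
    apply le_antisymm
    · apply convexHull_min
      · intro y hy
        have : y = a ∨ y = b ∨ y = c := by simpa using hy
        rcases this with rfl | rfl | rfl
        · exact ⟨le_of_eq hpa.1.symm, le_of_eq hpa.2.1.symm, by rw [hpa.1, hpa.2.1]; norm_num,
            hpa.2.2⟩
        · exact ⟨by rw [hpb.1]; norm_num, le_of_eq hpb.2.1.symm, by rw [hpb.1, hpb.2.1]; norm_num,
            hpb.2.2⟩
        · exact ⟨le_of_eq hpc.1.symm, by rw [hpc.2.1]; norm_num, by rw [hpc.1, hpc.2.1]; norm_num,
            hpc.2.2⟩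
      · intro x hx y hy θ τ hθ hτ hsum
        obtain ⟨hx0, hx1, hx2, hx3⟩ := hx
        obtain ⟨hy0, hy1, hy2, hy3⟩ := hy
        refine ⟨?_, ?_, ?_, ?_⟩
        · rw [Convex.combo_affine_apply hsum, smul_eq_mul, smul_eq_mul]
          exact add_nonneg (mul_nonneg hθ hx0) (mul_nonneg hτ hy0)
        · rw [Convex.combo_affine_apply hsum, smul_eq_mul, smul_eq_mul]
          exact add_nonneg (mul_nonneg hθ hx1) (mul_nonneg hτ hy1)
        · rw [Convex.combo_affine_apply hsum, Convex.combo_affine_apply hsum,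
            smul_eq_mul, smul_eq_mul, smul_eq_mul, smul_eq_mul]
          nlinarith
        · rw [Convex.combo_affine_apply hsum, smul_eq_mul, smul_eq_mul, hx3, hy3]
          ring
    · intro x hx
      obtain ⟨h0, h1, h2, h3⟩ := hx
      have hx' : x = (1 - coordA 0 x - coordA 1 x) • a + coordA 0 x • b + coordA 1 x • c := by
        have h := hrecon x
        rw [h3, zero_smul, add_zero] at h
        conv_lhs => rw [h]
        module
      have hmem := (convex_convexHull ℝ (({a, b, c} : Finset (Pt 3)) : Set (Pt 3))).sum_mem
        (t := (Finset.univ : Finset (Fin 3)))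
        (w := ![1 - coordA 0 x - coordA 1 x, coordA 0 x, coordA 1 x]) (z := ![a, b, c])
        (by intro i _; fin_cases i
            · show (0:ℝ) ≤ 1 - coordA 0 x - coordA 1 x; linarith
            · exact h0
            · exact h1)
        (by rw [Fin.sum_univ_three]; show 1 - coordA 0 x - coordA 1 x + coordA 0 x + coordA 1 x = 1
            ring)
        (by intro i _; fin_cases i <;> apply subset_convexHull <;> simp)
      rw [Fin.sum_univ_three] at hmem
      have harg : (![1 - coordA 0 x - coordA 1 x, coordA 0 x, coordA 1 x] : Fin 3 → ℝ) 0
          • (![a,b,c] : Fin 3 → Pt 3) 0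
          + (![1 - coordA 0 x - coordA 1 x, coordA 0 x, coordA 1 x] : Fin 3 → ℝ) 1
          • (![a,b,c] : Fin 3 → Pt 3) 1
          + (![1 - coordA 0 x - coordA 1 x, coordA 0 x, coordA 1 x] : Fin 3 → ℝ) 2
          • (![a,b,c] : Fin 3 → Pt 3) 2 = x := by
        show (1 - coordA 0 x - coordA 1 x) • a + coordA 0 x • b + coordA 1 x • c = x
        rw [← hx']
      rwa [harg] at hmem
  refine ⟨⟨coordA 0, coordA 1, coordA 2, n, hn0, ?_, ?_, ?_, ?_, ?_,
    a + ((1/3 : ℝ) • (b - a) + (1/3 : ℝ) • (c - a) + (0:ℝ) • n), ?_, ?_, ?_⟩⟩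
  · exact hhull
  · intro x s
    rw [happ, happ]
    have : x + s • n - a = (x - a) + s • n := by abel
    rw [this]
    have e2 : n = B 2 := by rw [hB]; rfl
    rw [e2, map_add, map_smul, Module.Basis.repr_self]
    simp [Finsupp.single_apply]
  · intro x s
    rw [happ, happ]
    have : x + s • n - a = (x - a) + s • n := by abel
    rw [this]
    have e2 : n = B 2 := by rw [hB]; rfl
    rw [e2, map_add, map_smul, Module.Basis.repr_self]
    simp [Finsupp.single_apply]
  · intro x s
    rw [happ, happ]
    have : x + s • n - a = (x - a) + s • n := by abel
    rw [this]
    have e2 : n = B 2 := by rw [hB]; rfl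
    rw [e2, map_add, map_smul, Module.Basis.repr_self]
    simp [Finsupp.single_apply]
  · -- notK
    intro q hu hv huv hw s hs hst hq
    have hqt : q ∈ convexHull ℝ (({a, b, c} : Finset (Pt 3)) : Set (Pt 3)) := by
      rw [hhull]; exact ⟨le_of_lt hu, le_of_lt hv, le_of_lt huv, hw⟩
    have hsub := Δ.inter_subset_convexHull s hs _ htf ⟨hq, hqt⟩
    have hnsub : ¬ ({a, b, c} : Finset (Pt 3)) ⊆ s := by
      intro hsub'
      have hcard3 : s.card ≤ ({a, b, c} : Finset (Pt 3)).card := by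
        rw [htc]; exact Δ.card_le s hs
      exact hst (Finset.eq_of_subset_of_card_le hsub' hcard3).symm
    obtain ⟨d, hdt, hds⟩ := Finset.not_subset.mp hnsub
    have hdm : d = a ∨ d = b ∨ d = c := by simpa using hdt
    rcases hdm with rfl | rfl | rfl
    · have hss : ((s ∩ {d, b, c} : Finset (Pt 3)) : Set (Pt 3)) ⊆ ({b, c} : Set (Pt 3)) := by
        intro y hy
        have hy' : y ∈ s ∧ (y = d ∨ y = b ∨ y = c) := by simpa using hy
        rcases hy'.2 with rfl | rfl | rfl
        · exact absurd hy'.1 hds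
        · exact Or.inl rfl
        · exact Or.inr rfl
      have hq2 := convexHull_mono hss hsub
      have hone : convexHull ℝ ({b, c} : Set (Pt 3)) ⊆
          {x | coordA 0 x + coordA 1 x = 1} := by
        apply convexHull_min
        · intro y hy
          rcases hy with rfl | rfl
          · show coordA 0 y + coordA 1 y = 1; rw [hpb.1, hpb.2.1]; norm_num
          · show coordA 0 y + coordA 1 y = 1; rw [hpc.1, hpc.2.1]; norm_num
        · intro x hx y hy θ τ hθ hτ hsum
          show coordA 0 _ + coordA 1 _ = 1
          rw [Convex.combo_affine_apply hsum, Convex.combo_affine_apply hsum,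
            smul_eq_mul, smul_eq_mul, smul_eq_mul, smul_eq_mul]
          have hx' : coordA 0 x + coordA 1 x = 1 := hx
          have hy' : coordA 0 y + coordA 1 y = 1 := hy
          linear_combination θ * hx' + τ * hy' + hsum
      have := hone hq2
      have : coordA 0 q + coordA 1 q = 1 := this
      linarith
    · have hss : ((s ∩ {a, d, c} : Finset (Pt 3)) : Set (Pt 3)) ⊆ ({a, c} : Set (Pt 3)) := by
        intro y hy
        have hy' : y ∈ s ∧ (y = a ∨ y = d ∨ y = c) := by simpa using hy
        rcases hy'.2 with rfl | rfl | rfl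
        · exact Or.inl rfl
        · exact absurd hy'.1 hds
        · exact Or.inr rfl
      have hq2 := convexHull_mono hss hsub
      have hone : convexHull ℝ ({a, c} : Set (Pt 3)) ⊆ {x | coordA 0 x = 0} := by
        apply convexHull_min
        · intro y hy
          rcases hy with rfl | rfl
          · exact hpa.1
          · exact hpc.1
        · intro x hx y hy θ τ hθ hτ hsum
          show coordA 0 _ = 0
          rw [Convex.combo_affine_apply hsum, smul_eq_mul, smul_eq_mul]
          have hx' : coordA 0 x = 0 := hx
          have hy' : coordA 0 y = 0 := hy
          linear_combination θ * hx' + τ * hy'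
      have : coordA 0 q = 0 := hone hq2
      linarith
    · have hss : ((s ∩ {a, b, d} : Finset (Pt 3)) : Set (Pt 3)) ⊆ ({a, b} : Set (Pt 3)) := by
        intro y hy
        have hy' : y ∈ s ∧ (y = a ∨ y = b ∨ y = d) := by simpa using hy
        rcases hy'.2 with rfl | rfl | rfl
        · exact Or.inl rfl
        · exact Or.inr rfl
        · exact absurd hy'.1 hds
      have hq2 := convexHull_mono hss hsub
      have hone : convexHull ℝ ({a, b} : Set (Pt 3)) ⊆ {x | coordA 1 x = 0} := by
        apply convexHull_min
        · intro y hy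
          rcases hy with rfl | rfl
          · exact hpa.2.1
          · exact hpb.2.1
        · intro x hx y hy θ τ hθ hτ hsum
          show coordA 1 _ = 0
          rw [Convex.combo_affine_apply hsum, smul_eq_mul, smul_eq_mul]
          have hx' : coordA 1 x = 0 := hx
          have hy' : coordA 1 y = 0 := hy
          linear_combination θ * hx' + τ * hy'
      have : coordA 1 q = 0 := hone hq2
      linarith
  · simpa using hco 0 (1/3) (1/3) 0
  · simpa using hco 1 (1/3) (1/3) 0
  · simpa using hco 2 (1/3) (1/3) 0

end Aux


private lemma combo_pos {θ τ p q : ℝ} (hθ : 0 ≤ θ) (hτ : 0 ≤ τ) (hsum : θ + τ = 1)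
    (hp : 0 < p) (hq : 0 < q) : 0 < θ * p + τ * q := by
  rcases eq_or_lt_of_le hθ with h | h
  · have hτ1 : τ = 1 := by linarith
    rw [← h, hτ1]
    ring_nf
    linarith
  · nlinarith [mul_nonneg hτ hq.le]

namespace TriSetup

open Metric

variable {Δ : TriangularConfiguration 3} {t : Finset (Pt 3)}

/-- The relative interior of the triangle, in coordinates. -/
def R (P : TriSetup Δ t) : Set (Pt 3) :=
  {x | 0 < P.u x ∧ 0 < P.v x ∧ P.u x + P.v x < 1 ∧ P.w x = 0}

lemma R_convex (P : TriSetup Δ t) : Convex ℝ P.R := by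
  intro x hx y hy θ τ hθ hτ hsum
  obtain ⟨hx0, hx1, hx2, hx3⟩ := hx
  obtain ⟨hy0, hy1, hy2, hy3⟩ := hy
  refine ⟨?_, ?_, ?_, ?_⟩
  · rw [Convex.combo_affine_apply hsum, smul_eq_mul, smul_eq_mul]
    exact combo_pos hθ hτ hsum hx0 hy0
  · rw [Convex.combo_affine_apply hsum, smul_eq_mul, smul_eq_mul]
    exact combo_pos hθ hτ hsum hx1 hy1
  · rw [Convex.combo_affine_apply hsum, Convex.combo_affine_apply hsum,
      smul_eq_mul, smul_eq_mul, smul_eq_mul, smul_eq_mul]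
    have := combo_pos hθ hτ hsum (by linarith : (0:ℝ) < 1 - (P.u x + P.v x))
      (by linarith : (0:ℝ) < 1 - (P.u y + P.v y))
    nlinarith
  · rw [Convex.combo_affine_apply hsum, smul_eq_mul, smul_eq_mul, hx3, hy3]
    ring

lemma cen_mem_R (P : TriSetup Δ t) : P.cen ∈ P.R :=
  ⟨by rw [P.hcu]; norm_num, by rw [P.hcv]; norm_num,
   by rw [P.hcu, P.hcv]; norm_num, P.hcw⟩

lemma cen_mem_hull (P : TriSetup Δ t) : P.cen ∈ convexHull ℝ (t : Set (Pt 3)) := by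
  rw [P.hull_eq]
  exact ⟨by rw [P.hcu]; norm_num, by rw [P.hcv]; norm_num,
    by rw [P.hcu, P.hcv]; norm_num, P.hcw⟩

/-- Near a relative-interior point of the triangle, the space of `Δ` is exactly
the zero set of `w`. -/
lemma ball_lemma (P : TriSetup Δ t) (ht : t ∈ Δ.faces) (q : Pt 3) (hq : q ∈ P.R) :
    ∃ ε > 0, ∀ x ∈ ball q ε, (x ∈ Δ.space ↔ P.w x = 0) := by
  classical
  set K : Set (Pt 3) := ⋃ s ∈ Δ.faces.erase t, convexHull ℝ (s : Set (Pt 3)) with hK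
  have hKclosed : IsClosed K := by
    apply isClosed_biUnion_finset
    intro s _
    exact (Set.Finite.isCompact_convexHull (𝕜 := ℝ) s.finite_toSet).isClosed
  have hqK : q ∉ K := by
    intro hqmem
    obtain ⟨s, hs, hxs⟩ := Set.mem_iUnion₂.mp hqmem
    exact P.notK q hq.1 hq.2.1 hq.2.2.1 hq.2.2.2 s (Finset.mem_of_mem_erase hs)
      (Finset.ne_of_mem_erase hs) hxs
  have hucont : Continuous P.u := P.u.continuous_of_finiteDimensional
  have hvcont : Continuous P.v := P.v.continuous_of_finiteDimensional
  set W : Set (Pt 3) := (P.u ⁻¹' Set.Ioi 0) ∩ (P.v ⁻¹' Set.Ioi 0) ∩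
    ((fun x => P.u x + P.v x) ⁻¹' Set.Iio 1) ∩ Kᶜ with hW
  have hWopen : IsOpen W :=
    (((isOpen_Ioi.preimage hucont).inter (isOpen_Ioi.preimage hvcont)).inter
      (isOpen_Iio.preimage (hucont.add hvcont))).inter hKclosed.isOpen_compl
  have hqW : q ∈ W := ⟨⟨⟨hq.1, hq.2.1⟩, hq.2.2.1⟩, hqK⟩
  obtain ⟨ε, hε, hball⟩ := Metric.isOpen_iff.mp hWopen q hqW
  refine ⟨ε, hε, ?_⟩
  intro x hx
  have hxW := hball hx
  constructor
  · intro hxspace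
    obtain ⟨s, hs, hxs⟩ := Set.mem_iUnion₂.mp hxspace
    by_cases hst : s = t
    · subst hst
      rw [P.hull_eq] at hxs
      exact hxs.2.2.2
    · exact absurd (Set.mem_iUnion₂.mpr ⟨s, Finset.mem_erase.mpr ⟨hst, hs⟩, hxs⟩) hxW.2
  · intro hwx
    have hxt : x ∈ convexHull ℝ (t : Set (Pt 3)) := by
      rw [P.hull_eq]
      exact ⟨hxW.1.1.1.le, hxW.1.1.2.le, hxW.1.2.le, hwx⟩
    exact Set.mem_iUnion₂.mpr ⟨t, ht, hxt⟩

/-- The triangle lies in the closure of its relative interior. -/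
lemma hull_subset_closure_R (P : TriSetup Δ t) :
    convexHull ℝ (t : Set (Pt 3)) ⊆ closure P.R := by
  intro x hx
  rw [P.hull_eq] at hx
  obtain ⟨h0, h1, h2, h3⟩ := hx
  set f : ℝ → Pt 3 := fun θ => θ • P.cen + (1 - θ) • x with hf
  have hfc : Continuous f := by
    apply Continuous.add
    · exact continuous_id.smul continuous_const
    · exact (continuous_const.sub continuous_id).smul continuous_const
  have htend : Filter.Tendsto (fun n : ℕ => f (1 / (n + 1))) Filter.atTop (nhds x) := by
    have h := tendsto_one_div_add_atTop_nhds_zero_nat (𝕜 := ℝ)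
    have := (hfc.tendsto 0).comp h
    simpa [hf, Function.comp_def] using this
  apply mem_closure_of_tendsto htend
  filter_upwards with n
  have hθpos : (0:ℝ) < 1 / (n + 1) := by positivity
  have hθle : (1:ℝ) / (n + 1) ≤ 1 := by
    rw [div_le_one (by positivity)]
    simp
  set θ : ℝ := 1 / (n + 1)
  have hsum : θ + (1 - θ) = 1 := by ring
  refine ⟨?_, ?_, ?_, ?_⟩
  · show 0 < P.u (θ • P.cen + (1 - θ) • x)
    rw [Convex.combo_affine_apply hsum, smul_eq_mul, smul_eq_mul, P.hcu]
    nlinarith [mul_nonneg (by linarith : (0:ℝ) ≤ 1 - θ) h0]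
  · show 0 < P.v (θ • P.cen + (1 - θ) • x)
    rw [Convex.combo_affine_apply hsum, smul_eq_mul, smul_eq_mul, P.hcv]
    nlinarith [mul_nonneg (by linarith : (0:ℝ) ≤ 1 - θ) h1]
  · show P.u (θ • P.cen + (1 - θ) • x) + P.v (θ • P.cen + (1 - θ) • x) < 1
    rw [Convex.combo_affine_apply hsum, Convex.combo_affine_apply hsum,
      smul_eq_mul, smul_eq_mul, smul_eq_mul, smul_eq_mul, P.hcu, P.hcv]
    nlinarith [mul_nonneg (by linarith : (0:ℝ) ≤ 1 - θ) (by linarith : (0:ℝ) ≤ 1 - (P.u x + P.v x))]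
  · show P.w (θ • P.cen + (1 - θ) • x) = 0
    rw [Convex.combo_affine_apply hsum, smul_eq_mul, smul_eq_mul, P.hcw, h3]
    ring

lemma side_convex (P : TriSetup Δ t) (q : Pt 3) (ε σ : ℝ) :
    Convex ℝ (ball q ε ∩ {x | 0 < σ * P.w x}) := by
  apply (convex_ball q ε).inter
  intro x hx y hy θ τ hθ hτ hsum
  have hx' : 0 < σ * P.w x := hx
  have hy' : 0 < σ * P.w y := hy
  show 0 < σ * P.w (θ • x + τ • y)
  rw [Convex.combo_affine_apply hsum, smul_eq_mul, smul_eq_mul]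
  have key : σ * (θ * P.w x + τ * P.w y) = θ * (σ * P.w x) + τ * (σ * P.w y) := by ring
  rw [key]
  exact combo_pos hθ hτ hsum hx' hy'

lemma side_mem (P : TriSetup Δ t) {y q : Pt 3} (hwy : P.w y = 0) {ε s σ : ℝ}
    (hσ : σ = 1 ∨ σ = -1) (hs : 0 < s) (hd : dist y q + s * ‖P.nv‖ < ε) :
    (y + (σ * s) • P.nv ∈ ball q ε ∩ {x | 0 < σ * P.w x}) ∧
      dist y (y + (σ * s) • P.nv) = s * ‖P.nv‖ := by
  have hσabs : |σ| = 1 := by rcases hσ with rfl | rfl <;> norm_num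
  have hdist : dist y (y + (σ * s) • P.nv) = s * ‖P.nv‖ := by
    rw [dist_self_add_right, norm_smul, Real.norm_eq_abs, abs_mul, hσabs, one_mul,
      abs_of_pos hs]
  refine ⟨⟨?_, ?_⟩, hdist⟩
  · rw [mem_ball]
    calc dist (y + (σ * s) • P.nv) q ≤ dist (y + (σ * s) • P.nv) y + dist y q :=
          dist_triangle _ _ _
      _ = s * ‖P.nv‖ + dist y q := by rw [dist_comm (y + (σ * s) • P.nv) y, hdist]
      _ < ε := by linarith
  · show 0 < σ * P.w (y + (σ * s) • P.nv)
    rw [P.shift_w, hwy, zero_add]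
    have : σ * (σ * s) = s := by rcases hσ with rfl | rfl <;> ring
    rw [this]
    exact hs

lemma side_closure (P : TriSetup Δ t) {q : Pt 3} (hwq : P.w q = 0) {ε σ : ℝ}
    (hε : 0 < ε) (hσ : σ = 1 ∨ σ = -1) :
    q ∈ closure (ball q ε ∩ {x | 0 < σ * P.w x}) := by
  rw [Metric.mem_closure_iff]
  intro δ hδ
  have hnv : 0 < ‖P.nv‖ := norm_pos_iff.mpr P.hn
  set s : ℝ := min (δ / (2 * ‖P.nv‖)) (ε / (2 * ‖P.nv‖)) with hsdef
  have hspos : 0 < s := lt_min (by positivity) (by positivity)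
  have hs1 : s * ‖P.nv‖ ≤ δ / 2 := by
    have h1 : s ≤ δ / (2 * ‖P.nv‖) := min_le_left _ _
    have h2 : (δ / (2 * ‖P.nv‖)) * ‖P.nv‖ = δ / 2 := by field_simp
    nlinarith
  have hs2 : s * ‖P.nv‖ ≤ ε / 2 := by
    have h1 : s ≤ ε / (2 * ‖P.nv‖) := min_le_right _ _
    have h2 : (ε / (2 * ‖P.nv‖)) * ‖P.nv‖ = ε / 2 := by field_simp
    nlinarith
  obtain ⟨hmem, hdist⟩ := P.side_mem (ε := ε) (q := q) hwq hσ hspos (by rw [dist_self]; linarith)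
  exact ⟨_, hmem, by rw [hdist]; linarith⟩

end TriSetup

section Cells

open Metric

lemma cell_subset_compl {Δ : TriangularConfiguration 3} {X : Set (Pt 3)}
    (hX : Δ.IsCell X) : X ⊆ Δ.spaceᶜ := by
  obtain ⟨x, _, rfl⟩ := hX
  exact connectedComponentIn_subset _ _

lemma cell_absorb {Δ : TriangularConfiguration 3} {X S : Set (Pt 3)} (hX : Δ.IsCell X)
    (hS : S ⊆ Δ.spaceᶜ) (hpre : IsPreconnected S) {y : Pt 3} (hyS : y ∈ S) (hyX : y ∈ X) :
    S ⊆ X := by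
  obtain ⟨x₀, hx₀, rfl⟩ := hX
  rw [connectedComponentIn_eq hyX]
  exact hpre.subset_connectedComponentIn hyS hS

lemma cell_eq_of_mem {Δ : TriangularConfiguration 3} {X Y : Set (Pt 3)} (hX : Δ.IsCell X)
    (hY : Δ.IsCell Y) {p : Pt 3} (hpX : p ∈ X) (hpY : p ∈ Y) : X = Y := by
  obtain ⟨x₀, hx₀, rfl⟩ := hX
  obtain ⟨y₀, hy₀, rfl⟩ := hY
  rw [connectedComponentIn_eq hpX, connectedComponentIn_eq hpY]

end Cells


/-- Every triangle of a triangular configuration `Δ` embedded into `ℝ³`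
is incident with at least one and at most two cells of `Δ`. -/
theorem triangle_incident_one_or_two_cells (Δ : TriangularConfiguration 3)
    (t : Finset (Pt 3)) (ht : t ∈ Δ.triangles) :
    (∃ X : Set (Pt 3), Δ.IncidentCell t X) ∧
    (∀ X₁ X₂ X₃ : Set (Pt 3), Δ.IncidentCell t X₁ → Δ.IncidentCell t X₂ →
      Δ.IncidentCell t X₃ → X₁ = X₂ ∨ X₁ = X₃ ∨ X₂ = X₃) := by
  classical
  obtain ⟨P⟩ := exists_triSetup Δ t ht
  have htf : t ∈ Δ.faces := (Finset.mem_filter.mp ht).1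
  obtain ⟨ε₀, hε₀, hb₀⟩ := P.ball_lemma htf P.cen P.cen_mem_R
  -- any side set avoids the space of Δ
  have hSsub : ∀ (q : Pt 3) (ε σ : ℝ), (∀ x ∈ Metric.ball q ε, (x ∈ Δ.space ↔ P.w x = 0)) →
      (Metric.ball q ε ∩ {x | 0 < σ * P.w x}) ⊆ Δ.spaceᶜ := by
    intro q ε σ hb x hx hxs
    have h0 := (hb x hx.1).mp hxs
    have h1 := hx.2
    rw [Set.mem_setOf_eq, h0, mul_zero] at h1
    exact lt_irrefl 0 h1
  -- absorption of a side set into a cell meeting it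
  have key : ∀ (q : Pt 3) (ε : ℝ), 0 < ε →
      (∀ x ∈ Metric.ball q ε, (x ∈ Δ.space ↔ P.w x = 0)) →
      ∀ σ : ℝ, (σ = 1 ∨ σ = -1) → ∀ X, Δ.IsCell X → ∀ p, p ∈ X → p ∈ Metric.ball q ε →
      0 < σ * P.w p → (Metric.ball q ε ∩ {x | 0 < σ * P.w x}) ⊆ X := by
    intro q ε hε hb σ hσ X hX p hpX hpb hσp
    exact cell_absorb hX (hSsub q ε σ hb) (P.side_convex q ε σ).isPreconnected
      ⟨hpb, hσp⟩ hpX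
  -- given a cell point near a relative interior point, produce its side
  have getσ : ∀ p, p ∈ Δ.spaceᶜ → ∀ (q : Pt 3) (ε : ℝ),
      (∀ x ∈ Metric.ball q ε, (x ∈ Δ.space ↔ P.w x = 0)) → p ∈ Metric.ball q ε →
      P.w p ≠ 0 := by
    intro p hp q ε hb hpb h0
    exact hp ((hb p hpb).mpr h0)
  constructor
  · -- at least one incident cell
    have hcencl := P.side_closure (σ := (1:ℝ)) P.cen_mem_R.2.2.2 hε₀ (Or.inl rfl)
    set S₀ : Set (Pt 3) := Metric.ball P.cen ε₀ ∩ {x | 0 < 1 * P.w x} with hS₀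
    have hS₀ne : S₀.Nonempty := by
      by_contra h
      rw [Set.not_nonempty_iff_eq_empty.mp h, closure_empty] at hcencl
      exact hcencl
    obtain ⟨x₀, hx₀S₀⟩ := hS₀ne
    have hS₀Ω : S₀ ⊆ Δ.spaceᶜ := hSsub P.cen ε₀ 1 hb₀
    have hx₀Ω : x₀ ∈ Δ.spaceᶜ := hS₀Ω hx₀S₀
    set X : Set (Pt 3) := connectedComponentIn Δ.spaceᶜ x₀ with hXdef
    have hXcell : Δ.IsCell X := ⟨x₀, hx₀Ω, rfl⟩
    have hS₀X : S₀ ⊆ X :=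
      (P.side_convex P.cen ε₀ 1).isPreconnected.subset_connectedComponentIn hx₀S₀ hS₀Ω
    have hcenclX : P.cen ∈ closure X := closure_mono hS₀X hcencl
    -- R ⊆ closure X by a clopen argument
    have hRX : P.R ⊆ closure X := by
      haveI := Subtype.preconnectedSpace P.R_convex.isPreconnected
      set A : Set ↥P.R := Subtype.val ⁻¹' closure X with hA
      have hAclosed : IsClosed A := isClosed_closure.preimage continuous_subtype_val
      have hAopen : IsOpen A := by
        rw [Metric.isOpen_iff]
        intro z hz
        obtain ⟨ε, hε, hb⟩ := P.ball_lemma htf z.1 z.2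
        have hzcl : z.1 ∈ closure X := hz
        obtain ⟨p, hpball, hpX⟩ :=
          _root_.mem_closure_iff.mp hzcl (Metric.ball z.1 ε) Metric.isOpen_ball
            (Metric.mem_ball_self hε)
        have hpΩ : p ∈ Δ.spaceᶜ := cell_subset_compl hXcell hpX
        have hwp : P.w p ≠ 0 := getσ p hpΩ z.1 ε hb hpball
        set σ : ℝ := if 0 < P.w p then 1 else -1 with hσdef
        have hσ : σ = 1 ∨ σ = -1 := by
          by_cases h : 0 < P.w p <;> simp [hσdef, h]
        have hσp : 0 < σ * P.w p := by
          by_cases h : 0 < P.w p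
          · rw [hσdef, if_pos h, one_mul]; exact h
          · have hlt : P.w p < 0 := lt_of_le_of_ne (not_lt.mp h) hwp
            rw [hσdef, if_neg h]; nlinarith
        have hSX := key z.1 ε hε hb σ hσ X hXcell p hpX hpball hσp
        refine ⟨ε/2, by linarith, ?_⟩
        intro y hy
        have hyz : dist y.1 z.1 < ε/2 := by
          have := Metric.mem_ball.mp hy
          rwa [Subtype.dist_eq] at this
        show y.1 ∈ closure X
        rw [Metric.mem_closure_iff]
        intro δ hδ
        have hnv : 0 < ‖P.nv‖ := norm_pos_iff.mpr P.hn
        set s : ℝ := min (δ / (2 * ‖P.nv‖)) (ε / (4 * ‖P.nv‖)) with hsdef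
        have hspos : 0 < s := lt_min (by positivity) (by positivity)
        have hs1 : s * ‖P.nv‖ ≤ δ / 2 := by
          have h1 : s ≤ δ / (2 * ‖P.nv‖) := min_le_left _ _
          have h2 : (δ / (2 * ‖P.nv‖)) * ‖P.nv‖ = δ / 2 := by field_simp
          nlinarith
        have hs2 : s * ‖P.nv‖ ≤ ε / 4 := by
          have h1 : s ≤ ε / (4 * ‖P.nv‖) := min_le_right _ _
          have h2 : (ε / (4 * ‖P.nv‖)) * ‖P.nv‖ = ε / 4 := by field_simp
          nlinarith
        obtain ⟨hmem, hdist⟩ := P.side_mem (ε := ε) (q := z.1) y.2.2.2.2 hσ hspos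
          (by linarith)
        exact ⟨_, hSX hmem, by rw [hdist]; linarith⟩
      have hAuniv : A = Set.univ :=
        IsClopen.eq_univ ⟨hAclosed, hAopen⟩ ⟨⟨P.cen, P.cen_mem_R⟩, hcenclX⟩
      intro q hq
      have : (⟨q, hq⟩ : ↥P.R) ∈ A := hAuniv ▸ Set.mem_univ _
      exact this
    refine ⟨X, hXcell, ?_⟩
    intro x hx
    have h1 : x ∈ closure P.R := P.hull_subset_closure_R hx
    have h2 : closure P.R ⊆ closure X := by
      have := closure_mono hRX
      rwa [closure_closure] at this
    exact h2 h1
  · -- at most two incident cells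
    intro X₁ X₂ X₃ h₁ h₂ h₃
    have hget : ∀ X : Set (Pt 3), Δ.IncidentCell t X →
        ∃ p, p ∈ X ∧ p ∈ Metric.ball P.cen ε₀ ∧ P.w p ≠ 0 := by
      intro X hX
      have hcl : P.cen ∈ closure X := hX.2 P.cen_mem_hull
      obtain ⟨p, hpball, hpX⟩ :=
        _root_.mem_closure_iff.mp hcl (Metric.ball P.cen ε₀) Metric.isOpen_ball
          (Metric.mem_ball_self hε₀)
      have hpΩ : p ∈ Δ.spaceᶜ := cell_subset_compl hX.1 hpX
      exact ⟨p, hpX, hpball, getσ p hpΩ P.cen ε₀ hb₀ hpball⟩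
    obtain ⟨p₁, hp₁X, hp₁b, hw₁⟩ := hget X₁ h₁
    obtain ⟨p₂, hp₂X, hp₂b, hw₂⟩ := hget X₂ h₂
    obtain ⟨p₃, hp₃X, hp₃b, hw₃⟩ := hget X₃ h₃
    have pair : ∀ X Y : Set (Pt 3), Δ.IsCell X → Δ.IsCell Y →
        ∀ p₁' p₂' : Pt 3, p₁' ∈ X → p₂' ∈ Y → p₁' ∈ Metric.ball P.cen ε₀ →
        p₂' ∈ Metric.ball P.cen ε₀ → P.w p₁' ≠ 0 → P.w p₂' ≠ 0 →
        ((0 < P.w p₁') ↔ (0 < P.w p₂')) → X = Y := by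
      intro X Y hX hY q₁ q₂ hq₁X hq₂Y hq₁b hq₂b hw1 hw2 hiff
      set σ : ℝ := if 0 < P.w q₁ then 1 else -1 with hσdef
      have hσ : σ = 1 ∨ σ = -1 := by
        by_cases h : 0 < P.w q₁ <;> simp [hσdef, h]
      have hσ1 : 0 < σ * P.w q₁ := by
        by_cases h : 0 < P.w q₁
        · rw [hσdef, if_pos h, one_mul]; exact h
        · have hlt : P.w q₁ < 0 := lt_of_le_of_ne (not_lt.mp h) hw1
          rw [hσdef, if_neg h]; nlinarith
      have hσ2 : 0 < σ * P.w q₂ := by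
        by_cases h : 0 < P.w q₁
        · rw [hσdef, if_pos h, one_mul]; exact hiff.mp h
        · have h2 : ¬ 0 < P.w q₂ := fun hc => h (hiff.mpr hc)
          have hlt : P.w q₂ < 0 := lt_of_le_of_ne (not_lt.mp h2) hw2
          rw [hσdef, if_neg h]; nlinarith
      have hSX := key P.cen ε₀ hε₀ hb₀ σ hσ X hX q₁ hq₁X hq₁b hσ1
      have hq₂X : q₂ ∈ X := hSX ⟨hq₂b, hσ2⟩
      exact cell_eq_of_mem hX hY hq₂X hq₂Y
    have tri : ((0 < P.w p₁) ↔ (0 < P.w p₂)) ∨ ((0 < P.w p₁) ↔ (0 < P.w p₃)) ∨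
        ((0 < P.w p₂) ↔ (0 < P.w p₃)) := by tauto
    rcases tri with h | h | h
    · exact Or.inl (pair X₁ X₂ h₁.1 h₂.1 p₁ p₂ hp₁X hp₂X hp₁b hp₂b hw₁ hw₂ h)
    · exact Or.inr (Or.inl (pair X₁ X₃ h₁.1 h₃.1 p₁ p₃ hp₁X hp₃X hp₁b hp₃b hw₁ hw₃ h))
    · exact Or.inr (Or.inr (pair X₂ X₃ h₂.1 h₃.1 p₂ p₃ hp₂X hp₃X hp₂b hp₃b hw₂ hw₃ h))
end
end

section
/- Let Δ be a triangular configuration embedded into ℝ³ and let t be a triangle of Δ that is incident with two (distinct) cells of Δ. Then the number of cells of the configuration Δ with t removed (keeping all faces of Δ other than the 2-dimensional face t) equals the number of cells of Δ minus one. -/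
open scoped Classical
noncomputable section

open Set Metric

section Aux

lemma TriangularConfiguration.isClosed_space {d : ℕ} (Γ : TriangularConfiguration d) :
    IsClosed Γ.space := by
  apply Set.Finite.isClosed_biUnion (Γ.faces.finite_toSet)
  intro s _
  exact ((s : Set (Pt d)).toFinite.isCompact_convexHull ℝ).isClosed

/-- If the closure of a connected component `V` of an open set `F ⊆ F'` meets `F'`
only inside `F`, then `V` is also a connected component of `F'`. -/
lemma connectedComponentIn_eq_of_closure {E : Type*} [TopologicalSpace E]
    [LocallyConnectedSpace E] {F F' : Set E} (hF : IsOpen F) (hFF' : F ⊆ F') {x : E}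
    (hx : x ∈ F)
    (hdis : ∀ y ∈ closure (connectedComponentIn F x), y ∈ F' → y ∈ F) :
    connectedComponentIn F' x = connectedComponentIn F x := by
  set V := connectedComponentIn F x with hV
  have hVopen : IsOpen V := hF.connectedComponentIn
  have hVF : V ⊆ F := connectedComponentIn_subset _ _
  have hkey : ∀ y ∈ F', y ∈ closure V → y ∈ V := by
    intro y hyF' hycl
    have hyF : y ∈ F := hdis y hycl hyF'
    have hyo : IsOpen (connectedComponentIn F y) := hF.connectedComponentIn
    have hne : (connectedComponentIn F y ∩ V).Nonempty := by
      have := mem_closure_iff.1 hycl _ hyo (mem_connectedComponentIn hyF)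
      exact this
    obtain ⟨z, hz1, hz2⟩ := hne
    have e1 : connectedComponentIn F y = connectedComponentIn F z :=
      connectedComponentIn_eq hz1
    have e2 : connectedComponentIn F z = V := (connectedComponentIn_eq hz2).symm
    have : y ∈ connectedComponentIn F y := mem_connectedComponentIn hyF
    rw [e1, e2] at this; exact this
  apply subset_antisymm
  · have hsub : connectedComponentIn F' x ⊆ V ∪ (closure V)ᶜ := by
      intro y hy
      by_cases hc : y ∈ closure V
      · exact Or.inl (hkey y (connectedComponentIn_subset _ _ hy) hc)
      · exact Or.inr hc
    refine IsPreconnected.subset_left_of_subset_union hVopen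
      isClosed_closure.isOpen_compl
      (disjoint_compl_right.mono_left subset_closure) hsub
      ⟨x, mem_connectedComponentIn (hFF' hx), mem_connectedComponentIn hx⟩
      isPreconnected_connectedComponentIn
  · exact isPreconnected_connectedComponentIn.subset_connectedComponentIn
      (mem_connectedComponentIn hx) (hVF.trans hFF')

end Aux

open scoped RealInnerProductSpace

set_option maxHeartbeats 2000000 in
/-- If a triangle `t` of `Δ` (embedded into `ℝ³`) is incident with two
distinct cells of `Δ`, then removing `t` from `Δ` decreases the number of cells by one. -/
theorem numCells_eraseTriangle (Δ : TriangularConfiguration 3)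
    (t : Finset (Pt 3)) (ht : t ∈ Δ.triangles)
    (X₁ X₂ : Set (Pt 3)) (h₁ : Δ.IncidentCell t X₁) (h₂ : Δ.IncidentCell t X₂)
    (hne : X₁ ≠ X₂) :
    (Δ.eraseTriangle t ht).numCells = Δ.numCells - 1 := by
  classical
  obtain ⟨htf, htcard⟩ := Finset.mem_filter.1 ht
  obtain ⟨a, b, c, hab, hac, hbc, habc⟩ := Finset.card_eq_three.1 htcard
  set Δ' := Δ.eraseTriangle t ht with hΔ'
  set U : Set (Pt 3) := Δ.spaceᶜ with hUdef
  set U' : Set (Pt 3) := Δ'.spaceᶜ with hU'def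
  have ha : a ∈ t := by rw [habc]; simp
  have hb : b ∈ t := by rw [habc]; simp
  have hc : c ∈ t := by rw [habc]; simp
  have hhullspace : convexHull ℝ (t : Set (Pt 3)) ⊆ Δ.space := by
    intro x hx
    exact Set.mem_biUnion htf hx
  have haff : AffineIndependent ℝ ![a, b, c] := by
    have hindep := Δ.indep t htf
    have he : ∀ i : Fin 3, ![a, b, c] i ∈ t := by
      intro i; fin_cases i <;> simpa
    have hinj : Function.Injective (fun i : Fin 3 => (⟨![a, b, c] i, he i⟩ : {x // x ∈ t})) := by
      intro i j hij
      have h' : ![a,b,c] i = ![a,b,c] j := congrArg Subtype.val hij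
      fin_cases i <;> fin_cases j <;>
        simp_all [hab, hac, hbc, Matrix.cons_val_zero, Matrix.cons_val_one, Matrix.head_cons]
    have h2 := hindep.comp_embedding ⟨fun i : Fin 3 => (⟨![a, b, c] i, he i⟩ : {x // x ∈ t}), hinj⟩
    have heq : ((↑) ∘ fun i : Fin 3 => (⟨![a, b, c] i, he i⟩ : {x // x ∈ t})) = ![a, b, c] := by
      funext i; rfl
    rwa [Function.Embedding.coeFn_mk, heq] at h2
  have huniq : ∀ w : Fin 3 → ℝ, w 0 + w 1 + w 2 = 0 →
      w 0 • a + w 1 • b + w 2 • c = 0 → ∀ i, w i = 0 := by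
    intro w hsum hcomb i
    refine affineIndependent_iff.1 haff Finset.univ w ?_ ?_ i (Finset.mem_univ i)
    · rw [Fin.sum_univ_three]; exact hsum
    · rw [Fin.sum_univ_three]; simpa using hcomb
  have hhull : ∀ x : Pt 3, x ∈ convexHull ℝ (t : Set (Pt 3)) ↔
      ∃ α β γ : ℝ, 0 ≤ α ∧ 0 ≤ β ∧ 0 ≤ γ ∧ α + β + γ = 1 ∧
        x = α • a + β • b + γ • c := by
    have hanb : a ∉ ({b, c} : Finset (Pt 3)) := by simp [hab, hac]
    have htins : t = insert a ({b, c} : Finset (Pt 3)) := habc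
    intro x
    rw [Finset.convexHull_eq]
    constructor
    · rintro ⟨w, hw0, hw1, hwx⟩
      have hsum3 : w a + (w b + w c) = 1 := by
        rw [htins, Finset.sum_insert hanb, Finset.sum_pair hbc] at hw1; exact hw1
      refine ⟨w a, w b, w c, hw0 a ha, hw0 b hb, hw0 c hc, by linarith, ?_⟩
      rw [Finset.centerMass_eq_of_sum_1 _ _ hw1] at hwx
      rw [htins, Finset.sum_insert hanb, Finset.sum_pair hbc] at hwx
      simp only [id] at hwx
      rw [← hwx]; abel
    · rintro ⟨α, β, γ, hα, hβ, hγ, hsum, rfl⟩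
      set w : Pt 3 → ℝ := fun y => if y = a then α else if y = b then β else γ with hwdef
      have hwa : w a = α := by simp [hwdef]
      have hwb : w b = β := by simp [hwdef, hab.symm]
      have hwc : w c = γ := by simp [hwdef, hac.symm, hbc.symm]
      have hw1 : ∑ y ∈ t, w y = 1 := by
        rw [htins, Finset.sum_insert hanb, Finset.sum_pair hbc, hwa, hwb, hwc]; linarith
      refine ⟨w, ?_, hw1, ?_⟩
      · intro y _; show (0:ℝ) ≤ if y = a then α else if y = b then β else γ
        split_ifs <;> assumption
      · rw [Finset.centerMass_eq_of_sum_1 _ _ hw1]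
        rw [htins, Finset.sum_insert hanb, Finset.sum_pair hbc]
        simp only [id, hwa, hwb, hwc]
        abel
  obtain ⟨n, hn0, hnb, hnc, hspan⟩ :
      ∃ n : Pt 3, n ≠ 0 ∧ ⟪b - a, n⟫ = 0 ∧ ⟪c - a, n⟫ = 0 ∧
        (∀ v : Pt 3, ⟪v, n⟫ = 0 → ∃ s u : ℝ, v = s • (b - a) + u • (c - a)) := by
    have hLI2 : LinearIndependent ℝ ![b - a, c - a] := by
      rw [Fintype.linearIndependent_iff]
      intro g hg
      rw [Fin.sum_univ_two] at hg
      simp only [Matrix.cons_val_zero, Matrix.cons_val_one, Matrix.head_cons] at hg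
      have h0 : (-(g 0 + g 1)) • a + g 0 • b + g 1 • c = 0 := by
        have he : g 0 • (b - a) + g 1 • (c - a) = (-(g 0 + g 1)) • a + g 0 • b + g 1 • c := by
          module
        rw [← he, hg]
      have hres := huniq ![-(g 0 + g 1), g 0, g 1] (by
        simp only [Matrix.cons_val_zero, Matrix.cons_val_one, Matrix.head_cons,
          Matrix.cons_val_two, Matrix.tail_cons]; ring)
        (by simpa [Matrix.cons_val_two, Matrix.tail_cons] using h0)
      intro i; fin_cases i
      · simpa using hres 1
      · simpa using hres 2
    set K : Submodule ℝ (Pt 3) := Submodule.span ℝ {b - a, c - a} with hK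
    have hrange : ({b - a, c - a} : Set (Pt 3)) = Set.range ![b - a, c - a] := by
      ext v; simp [Fin.exists_fin_two, or_comm]
    have hKrank : Module.finrank ℝ K = 2 := by
      rw [hK, hrange, finrank_span_eq_card hLI2]
      simp
    have hdim : Module.finrank ℝ (Pt 3) = 3 := by simp
    have hKne : K ≠ ⊤ := by
      intro h
      rw [h, finrank_top, hdim] at hKrank
      omega
    have hKo : Kᗮ ≠ ⊥ := fun h => hKne (Submodule.orthogonal_eq_bot_iff.1 h)
    obtain ⟨n, hnK, hn0⟩ := Submodule.exists_mem_ne_zero_of_ne_bot hKo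
    have hmemb : b - a ∈ K := Submodule.subset_span (by simp)
    have hmemc : c - a ∈ K := Submodule.subset_span (by simp)
    have hnb : ⟪b - a, n⟫ = 0 := (Submodule.mem_orthogonal K n).1 hnK _ hmemb
    have hnc : ⟪c - a, n⟫ = 0 := (Submodule.mem_orthogonal K n).1 hnK _ hmemc
    have horank : Module.finrank ℝ Kᗮ = 1 := by
      have hsum := Submodule.finrank_add_finrank_orthogonal K
      rw [hKrank, hdim] at hsum
      omega
    have hsn : Submodule.span ℝ {n} = Kᗮ := by
      apply Submodule.eq_of_le_of_finrank_eq
      · rw [Submodule.span_singleton_le_iff_mem]; exact hnK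
      · rw [horank, finrank_span_singleton hn0]
    refine ⟨n, hn0, hnb, hnc, ?_⟩
    intro v hv
    have hvK : v ∈ K := by
      rw [← Submodule.orthogonal_orthogonal K]
      rw [Submodule.mem_orthogonal]
      intro w hw
      rw [← hsn] at hw
      obtain ⟨r, rfl⟩ := Submodule.mem_span_singleton.1 hw
      rw [real_inner_smul_left, real_inner_comm, hv, mul_zero]
    obtain ⟨s, u, hsu⟩ := Submodule.mem_span_pair.1 hvK
    exact ⟨s, u, hsu.symm⟩
  set f : Pt 3 → ℝ := fun x => ⟪x - a, n⟫ with hfdef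
  have hafff : ∀ (θ σ : ℝ) (z₁ z₂ : Pt 3), θ + σ = 1 →
      f (θ • z₁ + σ • z₂) = θ * f z₁ + σ * f z₂ := by
    intro θ σ z₁ z₂ hθσ
    have he : θ • z₁ + σ • z₂ - a = θ • (z₁ - a) + σ • (z₂ - a) := by
      have hσ' : σ = 1 - θ := by linarith
      rw [hσ']; module
    simp only [hfdef]
    rw [he, inner_add_left, real_inner_smul_left, real_inner_smul_left]
  have hplane : ∀ x ∈ convexHull ℝ (t : Set (Pt 3)), f x = 0 := by
    intro x hx
    obtain ⟨α, β, γ, -, -, -, hsum, rfl⟩ := (hhull x).1 hx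
    have hα : α = 1 - β - γ := by linarith
    have hx' : α • a + β • b + γ • c - a = β • (b - a) + γ • (c - a) := by
      rw [hα]; module
    simp only [hfdef]
    rw [hx', inner_add_left, real_inner_smul_left, real_inner_smul_left, hnb, hnc]
    ring
  set R : Set (Pt 3) := {x | ∃ α β γ : ℝ, 0 < α ∧ 0 < β ∧ 0 < γ ∧ α + β + γ = 1 ∧
      x = α • a + β • b + γ • c} with hRdef
  have hRhull : R ⊆ convexHull ℝ (t : Set (Pt 3)) := by
    rintro x ⟨α, β, γ, hα, hβ, hγ, hsum, rfl⟩
    exact (hhull _).2 ⟨α, β, γ, hα.le, hβ.le, hγ.le, hsum, rfl⟩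
  have hposc : ∀ θ σ p₁ p₂ : ℝ, 0 ≤ θ → 0 ≤ σ → θ + σ = 1 → 0 < p₁ → 0 < p₂ →
      0 < θ * p₁ + σ * p₂ := by
    intro θ σ p₁ p₂ hθ hσ hθσ h1 h2
    rcases eq_or_lt_of_le hθ with h | h
    · have hσ1 : σ = 1 := by linarith
      rw [← h, hσ1]; simpa using h2
    · nlinarith [mul_nonneg hσ h2.le]
  have hRconv : Convex ℝ R := by
    rintro x ⟨α₁, β₁, γ₁, hα₁, hβ₁, hγ₁, hs₁, rfl⟩ y ⟨α₂, β₂, γ₂, hα₂, hβ₂, hγ₂, hs₂, rfl⟩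
      θ σ hθ hσ hθσ
    refine ⟨θ*α₁+σ*α₂, θ*β₁+σ*β₂, θ*γ₁+σ*γ₂, hposc θ σ _ _ hθ hσ hθσ hα₁ hα₂,
      hposc θ σ _ _ hθ hσ hθσ hβ₁ hβ₂, hposc θ σ _ _ hθ hσ hθσ hγ₁ hγ₂,
      by linear_combination θ * hs₁ + σ * hs₂ + hθσ, by module⟩
  set p : Pt 3 := (3 : ℝ)⁻¹ • a + (3:ℝ)⁻¹ • b + (3:ℝ)⁻¹ • c with hpdef
  have hpR : p ∈ R := ⟨(3:ℝ)⁻¹, (3:ℝ)⁻¹, (3:ℝ)⁻¹, by norm_num, by norm_num, by norm_num,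
    by norm_num, rfl⟩
  have hfaces' : Δ'.faces = Δ.faces.erase t := rfl
  have hspace_eq : Δ.space = Δ'.space ∪ convexHull ℝ (t : Set (Pt 3)) := by
    apply subset_antisymm
    · intro x hx
      rw [TriangularConfiguration.space, Set.mem_iUnion₂] at hx
      obtain ⟨s, hs, hxs⟩ := hx
      by_cases hst : s = t
      · right; rwa [hst] at hxs
      · left
        rw [TriangularConfiguration.space, Set.mem_iUnion₂]
        exact ⟨s, by rw [hfaces']; exact Finset.mem_erase.2 ⟨hst, hs⟩, hxs⟩
    · rintro x (hx | hx)
      · rw [TriangularConfiguration.space, Set.mem_iUnion₂] at hx ⊢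
        obtain ⟨s, hs, hxs⟩ := hx
        rw [hfaces'] at hs
        exact ⟨s, Finset.mem_of_mem_erase hs, hxs⟩
      · exact hhullspace hx
  have hseg : ∀ (q r x : Pt 3), x ∈ convexHull ℝ ({q, r} : Set (Pt 3)) →
      ∃ s u : ℝ, 0 ≤ s ∧ 0 ≤ u ∧ s + u = 1 ∧ s • q + u • r = x := by
    intro q r x hx
    rw [convexHull_pair] at hx
    exact hx
  have hRnot : ∀ x ∈ R, x ∉ Δ'.space := by
    rintro x hxR hxs
    have hxt : x ∈ convexHull ℝ (t : Set (Pt 3)) := hRhull hxR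
    obtain ⟨α, β, γ, hα, hβ, hγ, hsum, hxeq⟩ := hxR
    rw [TriangularConfiguration.space, Set.mem_iUnion₂] at hxs
    obtain ⟨u, hu, hxu⟩ := hxs
    rw [hfaces'] at hu
    obtain ⟨hut, huf⟩ := Finset.mem_erase.1 hu
    have hxint : x ∈ convexHull ℝ ((u ∩ t : Finset (Pt 3)) : Set (Pt 3)) :=
      Δ.inter_subset_convexHull u huf t htf ⟨hxu, hxt⟩
    have hss : u ∩ t ⊆ t := Finset.inter_subset_right
    have hne' : u ∩ t ≠ t := by
      intro h
      have htu : t ⊆ u := Finset.inter_eq_right.1 h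
      exact hut (Finset.eq_of_subset_of_card_le htu
        (by rw [htcard]; exact Δ.card_le u huf)).symm
    obtain ⟨v, hvt, hvu⟩ := Finset.exists_of_ssubset (ssubset_of_subset_of_ne hss hne')
    have hsub' : (↑(u ∩ t) : Set (Pt 3)) ⊆ ↑(t.erase v) := by
      intro z hz
      have hz' : z ∈ u ∩ t := hz
      exact Finset.mem_erase.2 ⟨fun hzv => hvu (hzv ▸ hz'), hss hz'⟩
    have hvabc : v = a ∨ v = b ∨ v = c := by
      have := habc ▸ hvt
      simpa using this
    rcases hvabc with hv | hv | hv
    · rw [hv] at hsub'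
      have hsub2 : (↑(t.erase a) : Set (Pt 3)) ⊆ {b, c} := by
        intro z hz
        obtain ⟨hzv, hzt⟩ := Finset.mem_erase.1 hz
        have := habc ▸ hzt
        simp only [Finset.mem_insert, Finset.mem_singleton] at this
        rcases this with rfl | rfl | rfl
        · exact absurd rfl hzv
        · exact Or.inl rfl
        · exact Or.inr rfl
      obtain ⟨s', u', hs', hu', hsum', heq⟩ := hseg b c x
        (convexHull_mono (hsub'.trans hsub2) hxint)
      have hcomb : α • a + (β - s') • b + (γ - u') • c = 0 := by
        have h1 : α • a + (β - s') • b + (γ - u') • c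
            = (α • a + β • b + γ • c) - (s' • b + u' • c) := by module
        rw [h1, ← hxeq, heq, sub_self]
      have := huniq ![α, β - s', γ - u'] (by
        simp only [Matrix.cons_val_zero, Matrix.cons_val_one, Matrix.head_cons,
          Matrix.cons_val_two, Matrix.tail_cons]; linarith)
        (by simpa [Matrix.cons_val_two, Matrix.tail_cons] using hcomb) 0
      simp only [Matrix.cons_val_zero] at this
      exact absurd this (ne_of_gt hα)
    · rw [hv] at hsub'
      have hsub2 : (↑(t.erase b) : Set (Pt 3)) ⊆ {a, c} := by
        intro z hz
        obtain ⟨hzv, hzt⟩ := Finset.mem_erase.1 hz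
        have := habc ▸ hzt
        simp only [Finset.mem_insert, Finset.mem_singleton] at this
        rcases this with rfl | rfl | rfl
        · exact Or.inl rfl
        · exact absurd rfl hzv
        · exact Or.inr rfl
      obtain ⟨s', u', hs', hu', hsum', heq⟩ := hseg a c x
        (convexHull_mono (hsub'.trans hsub2) hxint)
      have hcomb : (α - s') • a + β • b + (γ - u') • c = 0 := by
        have h1 : (α - s') • a + β • b + (γ - u') • c
            = (α • a + β • b + γ • c) - (s' • a + u' • c) := by module
        rw [h1, ← hxeq, heq, sub_self]
      have := huniq ![α - s', β, γ - u'] (by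
        simp only [Matrix.cons_val_zero, Matrix.cons_val_one, Matrix.head_cons,
          Matrix.cons_val_two, Matrix.tail_cons]; linarith)
        (by simpa [Matrix.cons_val_two, Matrix.tail_cons] using hcomb) 1
      simp only [Matrix.cons_val_one, Matrix.head_cons] at this
      exact absurd this (ne_of_gt hβ)
    · rw [hv] at hsub'
      have hsub2 : (↑(t.erase c) : Set (Pt 3)) ⊆ {a, b} := by
        intro z hz
        obtain ⟨hzv, hzt⟩ := Finset.mem_erase.1 hz
        have := habc ▸ hzt
        simp only [Finset.mem_insert, Finset.mem_singleton] at this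
        rcases this with rfl | rfl | rfl
        · exact Or.inl rfl
        · exact Or.inr rfl
        · exact absurd rfl hzv
      obtain ⟨s', u', hs', hu', hsum', heq⟩ := hseg a b x
        (convexHull_mono (hsub'.trans hsub2) hxint)
      have hcomb : (α - s') • a + (β - u') • b + γ • c = 0 := by
        have h1 : (α - s') • a + (β - u') • b + γ • c
            = (α • a + β • b + γ • c) - (s' • a + u' • b) := by module
        rw [h1, ← hxeq, heq, sub_self]
      have := huniq ![α - s', β - u', γ] (by
        simp only [Matrix.cons_val_zero, Matrix.cons_val_one, Matrix.head_cons,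
          Matrix.cons_val_two, Matrix.tail_cons]; linarith)
        (by simpa [Matrix.cons_val_two, Matrix.tail_cons] using hcomb) 2
      simp only [Matrix.cons_val_two, Matrix.tail_cons, Matrix.head_cons] at this
      exact absurd this (ne_of_gt hγ)
  have hedge : ∀ (q r : Pt 3), q ∈ t → r ∈ t → q ≠ r →
      ({q, r} : Finset (Pt 3)) ∈ Δ'.faces := by
    intro q r hq hr hqr
    rw [hfaces']
    refine Finset.mem_erase.2 ⟨?_, Δ.down_closed t htf _ ?_ (Finset.insert_ne_empty _ _)⟩
    · intro h
      have : ({q, r} : Finset (Pt 3)).card = 2 := by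
        rw [Finset.card_insert_of_notMem (by simpa using hqr), Finset.card_singleton]
      rw [h, htcard] at this
      omega
    · intro z hz
      rcases Finset.mem_insert.1 hz with rfl | hz'
      · exact hq
      · rw [Finset.mem_singleton.1 hz']; exact hr
  have hhull_diff : ∀ x ∈ convexHull ℝ (t : Set (Pt 3)), x ∉ R → x ∈ Δ'.space := by
    intro x hx hxR
    obtain ⟨α, β, γ, hα, hβ, hγ, hsum, hxeq⟩ := (hhull x).1 hx
    have hzero : α = 0 ∨ β = 0 ∨ γ = 0 := by
      by_contra h
      push_neg at h
      exact hxR ⟨α, β, γ, lt_of_le_of_ne hα (Ne.symm h.1),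
        lt_of_le_of_ne hβ (Ne.symm h.2.1), lt_of_le_of_ne hγ (Ne.symm h.2.2), hsum, hxeq⟩
    rw [TriangularConfiguration.space, Set.mem_iUnion₂]
    rcases hzero with h0 | h0 | h0
    · refine ⟨{b, c}, hedge b c hb hc hbc, ?_⟩
      rw [Finset.coe_insert, Finset.coe_singleton, convexHull_pair]
      exact ⟨β, γ, hβ, hγ, by linarith, by rw [hxeq, h0]; module⟩
    · refine ⟨{a, c}, hedge a c ha hc hac, ?_⟩
      rw [Finset.coe_insert, Finset.coe_singleton, convexHull_pair]
      exact ⟨α, γ, hα, hγ, by linarith, by rw [hxeq, h0]; module⟩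
    · refine ⟨{a, b}, hedge a b ha hb hab, ?_⟩
      rw [Finset.coe_insert, Finset.coe_singleton, convexHull_pair]
      exact ⟨α, β, hα, hβ, by linarith, by rw [hxeq, h0]; module⟩
  have hUopen : IsOpen U := Δ.isClosed_space.isOpen_compl
  have hU'open : IsOpen U' := Δ'.isClosed_space.isOpen_compl
  have hUU' : U ⊆ U' := compl_subset_compl.2 (by rw [hspace_eq]; exact subset_union_left)
  have hRU' : R ⊆ U' := fun x hx => hRnot x hx
  have hRU : ∀ x ∈ R, x ∉ U := fun x hx hxU => hxU (hhullspace (hRhull hx))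
  have hU'union : ∀ x ∈ U', x ∈ U ∨ x ∈ R := by
    intro x hx
    by_cases hxs : x ∈ Δ.space
    · right
      rcases (hspace_eq ▸ hxs) with h | h
      · exact absurd h hx
      · by_contra hxR
        exact hx (hhull_diff x h hxR)
    · left; exact hxs
  have hball : ∀ q : Pt 3, ∃ δ : ℝ, 0 < δ ∧ (q ∈ R →
      (∀ x, dist x q < δ → x ∉ Δ'.space) ∧
      (∀ x, dist x q < δ → f x = 0 → x ∈ R)) := by
    have hnorm' : (0:ℝ) < ‖n‖ := norm_pos_iff.2 hn0
    have hLI3 : LinearIndependent ℝ ![b - a, c - a, n] := by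
      rw [Fintype.linearIndependent_iff]
      intro g hg
      rw [Fin.sum_univ_three] at hg
      simp only [Matrix.cons_val_zero, Matrix.cons_val_one, Matrix.head_cons,
        Matrix.cons_val_two, Matrix.tail_cons] at hg
      have h2 : g 2 = 0 := by
        have hin := congrArg (fun v : Pt 3 => ⟪v, n⟫) hg
        simp only [inner_add_left, real_inner_smul_left, hnb, hnc, inner_zero_left,
          real_inner_self_eq_norm_mul_norm] at hin
        have hnn : (0:ℝ) < ‖n‖ * ‖n‖ := mul_pos hnorm' hnorm'
        nlinarith [hin]
      rw [h2, zero_smul, add_zero] at hg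
      have h0 : (-(g 0 + g 1)) • a + g 0 • b + g 1 • c = 0 := by
        have he : g 0 • (b - a) + g 1 • (c - a) = (-(g 0 + g 1)) • a + g 0 • b + g 1 • c := by
          module
        rw [← he, hg]
      have hres := huniq ![-(g 0 + g 1), g 0, g 1] (by
        simp only [Matrix.cons_val_zero, Matrix.cons_val_one, Matrix.head_cons,
          Matrix.cons_val_two, Matrix.tail_cons]; ring)
        (by simpa [Matrix.cons_val_two, Matrix.tail_cons] using h0)
      intro i; fin_cases i
      · simpa using hres 1
      · simpa using hres 2
      · exact h2
    have hcard3 : Fintype.card (Fin 3) = Module.finrank ℝ (Pt 3) := by simp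
    set B : Module.Basis (Fin 3) ℝ (Pt 3) := basisOfLinearIndependentOfCardEqFinrank hLI3 hcard3
      with hBdef
    have hBcoe : ∀ i, B i = ![b - a, c - a, n] i := by
      intro i
      rw [hBdef, coe_basisOfLinearIndependentOfCardEqFinrank]
    have hrepr : ∀ s u : ℝ, ∀ i, B.repr (s • (b - a) + u • (c - a)) i = ![s, u, 0] i := by
      intro s u i
      have he : s • (b - a) + u • (c - a) = ∑ j, ![s, u, 0] j • B j := by
        rw [Fin.sum_univ_three, hBcoe, hBcoe, hBcoe]
        simp only [Matrix.cons_val_zero, Matrix.cons_val_one, Matrix.head_cons,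
          Matrix.cons_val_two, Matrix.tail_cons]
        rw [zero_smul, add_zero]
      rw [he, B.repr_sum_self]
    have hcont : ∀ i : Fin 3, Continuous fun x : Pt 3 => B.repr (x - a) i := by
      intro i
      have h1 : Continuous fun y : Pt 3 => B.repr y i := by
        have := (B.coord i).continuous_of_finiteDimensional
        rwa [show (⇑(B.coord i)) = fun y => B.repr y i from funext fun y => B.coord_apply i y] at this
      exact h1.comp (continuous_id.sub continuous_const)
    intro q
    by_cases hq : q ∈ R
    · obtain ⟨α, β, γ, hα, hβ, hγ, hsum, hqeq⟩ := hq
      have hq' : q ∈ R := ⟨α, β, γ, hα, hβ, hγ, hsum, hqeq⟩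
      obtain ⟨δ₁, hδ₁, hball₁⟩ := Metric.isOpen_iff.1 (Δ'.isClosed_space.isOpen_compl) q
        (hRnot q hq')
      have hqa : q - a = β • (b - a) + γ • (c - a) := by
        rw [hqeq]
        have hα' : α = 1 - β - γ := by linarith
        rw [hα']; module
      have hg1 : B.repr (q - a) 0 = β := by rw [hqa, hrepr]; rfl
      have hg2 : B.repr (q - a) 1 = γ := by rw [hqa, hrepr]; rfl
      set O : Set (Pt 3) := {x | 0 < B.repr (x - a) 0} ∩ {x | 0 < B.repr (x - a) 1} ∩
        {x | B.repr (x - a) 0 + B.repr (x - a) 1 < 1} with hOdef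
      have hOopen : IsOpen O := by
        refine IsOpen.inter (IsOpen.inter ?_ ?_) ?_
        · exact isOpen_lt continuous_const (hcont 0)
        · exact isOpen_lt continuous_const (hcont 1)
        · exact isOpen_lt ((hcont 0).add (hcont 1)) continuous_const
      have hqO : q ∈ O := by
        refine ⟨⟨?_, ?_⟩, ?_⟩
        · show (0:ℝ) < B.repr (q - a) 0; rw [hg1]; exact hβ
        · show (0:ℝ) < B.repr (q - a) 1; rw [hg2]; exact hγ
        · show B.repr (q - a) 0 + B.repr (q - a) 1 < 1
          rw [hg1, hg2]; linarith
      obtain ⟨δ₂, hδ₂, hball₂⟩ := Metric.isOpen_iff.1 hOopen q hqO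
      refine ⟨min δ₁ δ₂, lt_min hδ₁ hδ₂, fun _ => ⟨?_, ?_⟩⟩
      · intro x hd
        exact hball₁ (mem_ball.2 (lt_of_lt_of_le hd (min_le_left _ _)))
      · intro x hd hfx
        have hxO : x ∈ O := hball₂ (mem_ball.2 (lt_of_lt_of_le hd (min_le_right _ _)))
        obtain ⟨s, u, hsu⟩ := hspan (x - a) hfx
        have hs0 : B.repr (x - a) 0 = s := by rw [hsu, hrepr]; rfl
        have hu0 : B.repr (x - a) 1 = u := by rw [hsu, hrepr]; rfl
        obtain ⟨⟨hx1, hx2⟩, hx3⟩ := hxO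
        simp only [Set.mem_setOf_eq] at hx1 hx2 hx3
        rw [hs0] at hx1
        rw [hu0] at hx2
        rw [hs0, hu0] at hx3
        refine ⟨1 - s - u, s, u, by linarith, hx1, hx2, by ring, ?_⟩
        have hxa : x = a + (s • (b - a) + u • (c - a)) := by
          rw [← hsu]; abel
        rw [hxa]; module
    · exact ⟨1, one_pos, fun h => absurd h hq⟩
  choose ε hεpos hεR using hball
  have hb1 : ∀ q ∈ R, ∀ x, dist x q < ε q → x ∉ Δ'.space := fun q hq => ((hεR q) hq).1
  have hb2 : ∀ q ∈ R, ∀ x, dist x q < ε q → f x = 0 → x ∈ R := fun q hq => ((hεR q) hq).2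
  have hb3 : ∀ q ∈ R, ∀ x, dist x q < ε q → f x ≠ 0 → x ∈ U := by
    intro q hq x hd hfx
    intro hxs
    rcases (hspace_eq ▸ hxs) with h | h
    · exact hb1 q hq x hd h
    · exact hfx (hplane x h)
  have hb4 : ∀ q ∈ R, ∀ x, dist x q < ε q → x ∈ U → f x ≠ 0 := by
    intro q hq x hd hxU hfx
    exact hRU x (hb2 q hq x hd hfx) hxU
  have hloc : ∀ q ∈ R, ∀ x y : Pt 3, dist x q < ε q → dist y q < ε q →
      ((0 < f x ∧ 0 < f y) ∨ (f x < 0 ∧ f y < 0)) →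
      connectedComponentIn U x = connectedComponentIn U y := by
    intro q hq x y hdx hdy hsign
    have hhalfpos : Convex ℝ {z : Pt 3 | 0 < f z} := by
      intro z₁ hz₁ z₂ hz₂ θ σ hθ hσ hθσ
      show 0 < f (θ • z₁ + σ • z₂)
      rw [hafff θ σ z₁ z₂ hθσ]
      exact hposc θ σ _ _ hθ hσ hθσ hz₁ hz₂
    have hhalfneg : Convex ℝ {z : Pt 3 | f z < 0} := by
      intro z₁ hz₁ z₂ hz₂ θ σ hθ hσ hθσ
      show f (θ • z₁ + σ • z₂) < 0
      rw [hafff θ σ z₁ z₂ hθσ]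
      have := hposc θ σ _ _ hθ hσ hθσ (neg_pos.2 hz₁) (neg_pos.2 hz₂)
      nlinarith
    rcases hsign with ⟨hx, hy⟩ | ⟨hx, hy⟩
    · set S : Set (Pt 3) := Metric.ball q (ε q) ∩ {z | 0 < f z} with hSdef
      have hSconv : Convex ℝ S := (convex_ball q (ε q)).inter hhalfpos
      have hSU : S ⊆ U := fun z hz => hb3 q hq z (mem_ball.1 hz.1) (ne_of_gt hz.2)
      have hxS : x ∈ S := ⟨mem_ball.2 hdx, hx⟩
      have hyS : y ∈ S := ⟨mem_ball.2 hdy, hy⟩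
      have hsub := hSconv.isPreconnected.subset_connectedComponentIn hxS hSU
      exact connectedComponentIn_eq (hsub hyS)
    · set S : Set (Pt 3) := Metric.ball q (ε q) ∩ {z | f z < 0} with hSdef
      have hSconv : Convex ℝ S := (convex_ball q (ε q)).inter hhalfneg
      have hSU : S ⊆ U := fun z hz => hb3 q hq z (mem_ball.1 hz.1) (ne_of_lt hz.2)
      have hxS : x ∈ S := ⟨mem_ball.2 hdx, hx⟩
      have hyS : y ∈ S := ⟨mem_ball.2 hdy, hy⟩
      have hsub := hSconv.isPreconnected.subset_connectedComponentIn hxS hSU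
      exact connectedComponentIn_eq (hsub hyS)
  have hnorm : (0:ℝ) < ‖n‖ := norm_pos_iff.2 hn0
  have hfR : ∀ q ∈ R, f q = 0 := fun q hq => hplane q (hRhull hq)
  have hwd : ∀ (q : Pt 3) (δ : ℝ), dist (q + δ • n) q = |δ| * ‖n‖ := by
    intro q δ
    rw [dist_eq_norm, add_sub_cancel_left, norm_smul, Real.norm_eq_abs]
  have hwf : ∀ q ∈ R, ∀ δ : ℝ, f (q + δ • n) = δ * (‖n‖ * ‖n‖) := by
    intro q hq δ
    have he : q + δ • n - a = (q - a) + δ • n := by module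
    have h0 : ⟪q - a, n⟫ = 0 := hfR q hq
    simp only [hfdef]
    rw [he, inner_add_left, real_inner_smul_left, real_inner_self_eq_norm_mul_norm, h0,
      zero_add]
  set cp : Pt 3 → Set (Pt 3) :=
    fun q => connectedComponentIn U (q + (ε q / (2 * ‖n‖)) • n) with hcpdef
  set cm : Pt 3 → Set (Pt 3) :=
    fun q => connectedComponentIn U (q + (-(ε q / (2 * ‖n‖))) • n) with hcmdef
  have hwitp : ∀ q ∈ R, dist (q + (ε q / (2 * ‖n‖)) • n) q < ε q ∧
      0 < f (q + (ε q / (2 * ‖n‖)) • n) := by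
    intro q hq
    have hδ : 0 < ε q / (2 * ‖n‖) := div_pos (hεpos q) (mul_pos two_pos hnorm)
    constructor
    · rw [hwd, abs_of_pos hδ, div_mul_eq_mul_div, div_lt_iff₀ (mul_pos two_pos hnorm)]
      nlinarith [hεpos q, hnorm]
    · rw [hwf q hq]
      exact mul_pos hδ (mul_pos hnorm hnorm)
  have hwitm : ∀ q ∈ R, dist (q + (-(ε q / (2 * ‖n‖))) • n) q < ε q ∧
      f (q + (-(ε q / (2 * ‖n‖))) • n) < 0 := by
    intro q hq
    have hδ : 0 < ε q / (2 * ‖n‖) := div_pos (hεpos q) (mul_pos two_pos hnorm)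
    constructor
    · rw [hwd, abs_neg, abs_of_pos hδ, div_mul_eq_mul_div, div_lt_iff₀ (mul_pos two_pos hnorm)]
      nlinarith [hεpos q, hnorm]
    · rw [hwf q hq]
      have h2 : 0 < (ε q / (2 * ‖n‖)) * (‖n‖ * ‖n‖) := mul_pos hδ (mul_pos hnorm hnorm)
      nlinarith
  have hcp : ∀ q ∈ R, ∀ x, dist x q < ε q → 0 < f x →
      connectedComponentIn U x = cp q := by
    intro q hq x hd hfx
    exact hloc q hq x _ hd (hwitp q hq).1 (Or.inl ⟨hfx, (hwitp q hq).2⟩)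
  have hcm : ∀ q ∈ R, ∀ x, dist x q < ε q → f x < 0 →
      connectedComponentIn U x = cm q := by
    intro q hq x hd hfx
    exact hloc q hq x _ hd (hwitm q hq).1 (Or.inr ⟨hfx, (hwitm q hq).2⟩)
  have hkey : ∀ z ∈ R, ∀ q ∈ R, dist z q < ε q → cp z = cp q ∧ cm z = cm q := by
    intro z hz q hq hd
    set δ := min (ε z) (ε q - dist z q) / (2 * ‖n‖) with hδdef
    have hmin : 0 < min (ε z) (ε q - dist z q) := lt_min (hεpos z) (by linarith)
    have hδpos : 0 < δ := div_pos hmin (mul_pos two_pos hnorm)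
    have hδn : δ * ‖n‖ = min (ε z) (ε q - dist z q) / 2 := by
      rw [hδdef]; field_simp
    have hd1 : dist (z + δ • n) z < ε z := by
      rw [hwd, abs_of_pos hδpos, hδn]
      have h1 : min (ε z) (ε q - dist z q) ≤ ε z := min_le_left _ _
      linarith [hεpos z]
    have hd2 : dist (z + δ • n) q < ε q := by
      calc dist (z + δ • n) q ≤ dist (z + δ • n) z + dist z q := dist_triangle _ _ _
        _ < ε q := by
            rw [hwd, abs_of_pos hδpos, hδn]
            have h1 : min (ε z) (ε q - dist z q) ≤ ε q - dist z q := min_le_right _ _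
            linarith
    have hd1' : dist (z + (-δ) • n) z < ε z := by
      rw [hwd, abs_neg, abs_of_pos hδpos, hδn]
      have h1 : min (ε z) (ε q - dist z q) ≤ ε z := min_le_left _ _
      linarith [hεpos z]
    have hd2' : dist (z + (-δ) • n) q < ε q := by
      calc dist (z + (-δ) • n) q ≤ dist (z + (-δ) • n) z + dist z q := dist_triangle _ _ _
        _ < ε q := by
            rw [hwd, abs_neg, abs_of_pos hδpos, hδn]
            have h1 : min (ε z) (ε q - dist z q) ≤ ε q - dist z q := min_le_right _ _
            linarith
    have hfpos : 0 < f (z + δ • n) := by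
      rw [hwf z hz]
      exact mul_pos hδpos (mul_pos hnorm hnorm)
    have hfneg : f (z + (-δ) • n) < 0 := by
      rw [hwf z hz]
      have := mul_pos hδpos (mul_pos hnorm hnorm)
      nlinarith
    constructor
    · rw [← hcp z hz _ hd1 hfpos, ← hcp q hq _ hd2 hfpos]
    · rw [← hcm z hz _ hd1' hfneg, ← hcm q hq _ hd2' hfneg]
  have hconst : ∀ q ∈ R, cp q = cp p ∧ cm q = cm p := by
    by_contra hbad
    push_neg at hbad
    obtain ⟨q₀, hq₀R, hq₀⟩ := hbad
    set G : Set (Pt 3) := {q | q ∈ R ∧ cp q = cp p ∧ cm q = cm p} with hGdef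
    set Gc : Set (Pt 3) := {q | q ∈ R ∧ ¬(cp q = cp p ∧ cm q = cm p)} with hGcdef
    set O₁ : Set (Pt 3) := ⋃ q ∈ G, Metric.ball q (ε q) with hO₁def
    set O₂ : Set (Pt 3) := ⋃ q ∈ Gc, Metric.ball q (ε q) with hO₂def
    have hO₁o : IsOpen O₁ := isOpen_biUnion fun _ _ => isOpen_ball
    have hO₂o : IsOpen O₂ := isOpen_biUnion fun _ _ => isOpen_ball
    have hsubO : R ⊆ O₁ ∪ O₂ := by
      intro q hq
      by_cases hgood : cp q = cp p ∧ cm q = cm p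
      · exact Or.inl (Set.mem_biUnion ⟨hq, hgood⟩ (mem_ball_self (hεpos q)))
      · exact Or.inr (Set.mem_biUnion ⟨hq, hgood⟩ (mem_ball_self (hεpos q)))
    have h1 : (R ∩ O₁).Nonempty :=
      ⟨p, hpR, Set.mem_biUnion ⟨hpR, rfl, rfl⟩ (mem_ball_self (hεpos p))⟩
    have h2 : (R ∩ O₂).Nonempty :=
      ⟨q₀, hq₀R, Set.mem_biUnion ⟨hq₀R, fun h => hq₀ h.1 h.2⟩ (mem_ball_self (hεpos q₀))⟩
    obtain ⟨z, hzR, hzO₁, hzO₂⟩ := hRconv.isPreconnected O₁ O₂ hO₁o hO₂o hsubO h1 h2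
    obtain ⟨q₁, hq₁G, hz₁⟩ := Set.mem_iUnion₂.1 hzO₁
    obtain ⟨q₂, hq₂G, hz₂⟩ := Set.mem_iUnion₂.1 hzO₂
    have e₁ := hkey z hzR q₁ hq₁G.1 (mem_ball.1 hz₁)
    have e₂ := hkey z hzR q₂ hq₂G.1 (mem_ball.1 hz₂)
    exact hq₂G.2 ⟨by rw [← e₂.1, e₁.1, hq₁G.2.1], by rw [← e₂.2, e₁.2, hq₁G.2.2]⟩
  have htwo : ∀ V : Set (Pt 3), Δ.IsCell V → (closure V ∩ R).Nonempty →
      V = cp p ∨ V = cm p := by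
    rintro V ⟨x₀, hx₀, rfl⟩ ⟨q, hqcl, hqR⟩
    obtain ⟨x, hxb, hxV⟩ := mem_closure_iff.1 hqcl (Metric.ball q (ε q)) isOpen_ball
      (mem_ball_self (hεpos q))
    have hxd : dist x q < ε q := mem_ball.1 hxb
    have hxU : x ∈ U := connectedComponentIn_subset _ _ hxV
    have hfx : f x ≠ 0 := hb4 q hqR x hxd hxU
    have hVx : connectedComponentIn U x₀ = connectedComponentIn U x :=
      connectedComponentIn_eq hxV
    rcases lt_or_gt_of_ne hfx with hneg | hpos
    · right; rw [hVx, hcm q hqR x hxd hneg, (hconst q hqR).2]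
    · left; rw [hVx, hcp q hqR x hxd hpos, (hconst q hqR).1]
  have hX₁two : X₁ = cp p ∨ X₁ = cm p :=
    htwo X₁ h₁.1 ⟨p, h₁.2 (hRhull hpR), hpR⟩
  have hX₂two : X₂ = cp p ∨ X₂ = cm p :=
    htwo X₂ h₂.1 ⟨p, h₂.2 (hRhull hpR), hpR⟩
  have htwo' : ∀ V : Set (Pt 3), Δ.IsCell V → (closure V ∩ R).Nonempty →
      V = X₁ ∨ V = X₂ := by
    intro V hV hVR
    rcases htwo V hV hVR with h | h <;> rcases hX₁two with h1 | h1 <;>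
      rcases hX₂two with h2 | h2 <;>
      first
        | (left; rw [h, ← h1])
        | (right; rw [h, ← h2])
        | (exact absurd (h1.trans h2.symm) hne)
  have hpU' : p ∈ U' := hRU' hpR
  set W : Set (Pt 3) := connectedComponentIn U' p with hWdef
  have hRW : R ⊆ W := hRconv.isPreconnected.subset_connectedComponentIn hpR hRU'
  have hWcell : Δ'.IsCell W := ⟨p, hpU', rfl⟩
  have hM1 : ∀ V : Set (Pt 3), Δ.IsCell V → closure V ∩ R = ∅ → Δ'.IsCell V := by
    rintro V ⟨x₀, hx₀, rfl⟩ hclR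
    refine ⟨x₀, hUU' hx₀, ?_⟩
    symm
    apply connectedComponentIn_eq_of_closure hUopen hUU' hx₀
    intro y hycl hyU'
    rcases hU'union y hyU' with h | h
    · exact h
    · exact absurd (Set.mem_inter hycl h) (by rw [hclR]; exact Set.notMem_empty y)
  have hM2 : ∀ V : Set (Pt 3), Δ'.IsCell V → V ≠ W →
      closure V ∩ R = ∅ ∧ Δ.IsCell V := by
    rintro V ⟨x₀, hx₀, rfl⟩ hVW
    have hclR : closure (connectedComponentIn U' x₀) ∩ R = ∅ := by
      by_contra h
      obtain ⟨q, hqcl, hqR⟩ := Set.nonempty_iff_ne_empty.2 h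
      obtain ⟨r, hr0, hrball⟩ := Metric.isOpen_iff.1 hU'open q (hRU' hqR)
      obtain ⟨z, hz1, hz2⟩ := mem_closure_iff.1 hqcl (Metric.ball q r) isOpen_ball
        (mem_ball_self hr0)
      have hball_sub : Metric.ball q r ⊆ connectedComponentIn U' q :=
        (convex_ball q r).isPreconnected.subset_connectedComponentIn (mem_ball_self hr0) hrball
      have hqW : q ∈ W := hRW hqR
      have hzW : z ∈ W := by
        have := hball_sub hz1
        rwa [← connectedComponentIn_eq hqW] at this
      apply hVW
      calc connectedComponentIn U' x₀ = connectedComponentIn U' z :=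
            connectedComponentIn_eq hz2
        _ = W := (connectedComponentIn_eq hzW).symm
    have hx₀U : x₀ ∈ U := by
      rcases hU'union x₀ hx₀ with h | h
      · exact h
      · exfalso
        have hmem : x₀ ∈ closure (connectedComponentIn U' x₀) ∩ R :=
          ⟨subset_closure (mem_connectedComponentIn hx₀), h⟩
        rw [hclR] at hmem; exact hmem
    have heq : connectedComponentIn U' x₀ = connectedComponentIn U x₀ := by
      apply connectedComponentIn_eq_of_closure hUopen hUU' hx₀U
      intro y hycl hyU'
      rcases hU'union y hyU' with h | h
      · exact h
      · exfalso
        have hsubc : connectedComponentIn U x₀ ⊆ connectedComponentIn U' x₀ :=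
          isPreconnected_connectedComponentIn.subset_connectedComponentIn
            (mem_connectedComponentIn hx₀U) ((connectedComponentIn_subset _ _).trans hUU')
        have hmem : y ∈ closure (connectedComponentIn U' x₀) ∩ R :=
          ⟨closure_mono hsubc hycl, h⟩
        rw [hclR] at hmem; exact hmem
    exact ⟨hclR, ⟨x₀, hx₀U, heq⟩⟩
  have hcells : Δ'.cells = insert W (Δ.cells \ {X₁, X₂}) := by
    ext V
    simp only [Set.mem_insert_iff, Set.mem_diff, Set.mem_singleton_iff]
    constructor
    · intro hV
      by_cases hVW : V = W
      · exact Or.inl hVW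
      · obtain ⟨hclR, hVcell⟩ := hM2 V hV hVW
        refine Or.inr ⟨hVcell, ?_⟩
        rintro (rfl | rfl)
        · have hmem : p ∈ closure V ∩ R := ⟨h₁.2 (hRhull hpR), hpR⟩
          rw [hclR] at hmem; exact hmem
        · have hmem : p ∈ closure V ∩ R := ⟨h₂.2 (hRhull hpR), hpR⟩
          rw [hclR] at hmem; exact hmem
    · rintro (rfl | ⟨hVcell, hVnot⟩)
      · exact hWcell
      · apply hM1 V hVcell
        by_contra h
        rcases htwo' V hVcell (Set.nonempty_iff_ne_empty.2 h) with rfl | rfl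
        · exact hVnot (Or.inl rfl)
        · exact hVnot (Or.inr rfl)
  have hpW : p ∈ W := mem_connectedComponentIn hpU'
  have hWnot : W ∉ Δ.cells \ {X₁, X₂} := by
    rintro ⟨⟨x₀, hx₀, hWeq⟩, -⟩
    have : W ⊆ U := hWeq ▸ connectedComponentIn_subset _ _
    exact (this hpW) (hhullspace (hRhull hpR))
  have hX₁c : X₁ ∈ Δ.cells := h₁.1
  have hX₂c : X₂ ∈ Δ.cells := h₂.1
  show Δ'.numCells = Δ.numCells - 1
  rw [TriangularConfiguration.numCells, TriangularConfiguration.numCells, hcells]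
  have hsub : ({X₁, X₂} : Set (Set (Pt 3))) ⊆ Δ.cells := by
    rintro V (rfl | rfl)
    · exact hX₁c
    · exact hX₂c
  by_cases hfin : Δ.cells.Finite
  · have hfin' : (Δ.cells \ {X₁, X₂}).Finite := hfin.diff
    rw [Set.ncard_insert_of_notMem hWnot hfin']
    rw [Set.ncard_diff hsub]
    have h2 : ({X₁, X₂} : Set (Set (Pt 3))).ncard = 2 := Set.ncard_pair hne
    have hle : 2 ≤ Δ.cells.ncard := h2 ▸ Set.ncard_le_ncard hsub hfin
    omega
  · have hinf : Δ.cells.Infinite := hfin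
    have hinf' : (Δ.cells \ {X₁, X₂}).Infinite :=
      hinf.diff (Set.toFinite _)
    rw [Set.Infinite.ncard (fun h => hinf' (h.subset (Set.subset_insert _ _))),
      Set.Infinite.ncard hinf]
end
end
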